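/- arXiv:1104.1960 — 2 statements merged into one kernel-verified Lean document; each statement's English description precedes it below -/
import Mathlib

section
/- Let 1 < p' < ∞. Then the subspace of finitely non-zero sequences g = (g_Q)_{Q∈𝒟} (i.e. sequences with g_Q ≠ 0 for at most finitely many Q) is dense in the Banach space Y_{p'}. -/
open MeasureTheory ENNReal

noncomputable section

/-- Index set for dyadic cubes in `ℝⁿ`: scale `j : ℤ` and position `k : ℤⁿ`. -/
abbrev DIdx (n : ℕ) := ℤ × (Fin n → ℤ)

/-- The open dyadic cube `2⁻ʲ(0,1)ⁿ + 2⁻ʲ k`. -/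
def dcube (n : ℕ) (Q : DIdx n) : Set (EuclideanSpace ℝ (Fin n)) :=
  {x | ∀ i, (2:ℝ) ^ (-Q.1) * (Q.2 i : ℝ) < x i ∧ x i < (2:ℝ) ^ (-Q.1) * ((Q.2 i : ℝ) + 1)}

/-- The `L_p` norm (valued in `ℝ≥0∞`) of an `ℝ≥0∞`-valued function. -/
def eLp {α : Type*} [MeasurableSpace α] (p : ℝ≥0∞) (F : α → ℝ≥0∞) (μ : Measure α) : ℝ≥0∞ :=
  if p = ∞ then essSup F μ else (∫⁻ x, F x ^ p.toReal ∂μ) ^ p.toReal⁻¹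

/-- The non-tangential maximal function `N_X f(x) = sup_{Q ∋ x} ‖f_Q‖`. -/
def NX {n : ℕ} {X : DIdx n → Type*} [∀ Q, NormedAddCommGroup (X Q)]
    (f : ∀ Q, X Q) (x : EuclideanSpace ℝ (Fin n)) : ℝ≥0∞ :=
  ⨆ Q, ⨆ (_ : x ∈ dcube n Q), (‖f Q‖₊ : ℝ≥0∞)

/-- The Carleson functional `C_Y g(x) = sup_{Q ∋ x} |Q|⁻¹ ∑_{R ⊆ Q} ‖g_R‖`. -/
def CY {n : ℕ} {Y : DIdx n → Type*} [∀ Q, NormedAddCommGroup (Y Q)]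
    (g : ∀ Q, Y Q) (x : EuclideanSpace ℝ (Fin n)) : ℝ≥0∞ :=
  ⨆ Q, ⨆ (_ : x ∈ dcube n Q),
    (volume (dcube n Q))⁻¹ * ∑' R : {R : DIdx n // dcube n R ⊆ dcube n Q}, (‖g R.1‖₊ : ℝ≥0∞)

/-- A duality between Banach spaces, with constant `C`. -/
def IsDuality {X Y : Type*} [NormedAddCommGroup X] [NormedSpace ℝ X]
    [NormedAddCommGroup Y] [NormedSpace ℝ Y]
    (pair : X →ₗ[ℝ] Y →ₗ[ℝ] ℝ) (C : ℝ) : Prop :=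
  (∀ f g, |pair f g| ≤ C * ‖f‖ * ‖g‖) ∧
  (∀ f, ‖f‖ ≤ C * sSup ((fun g => pair f g) '' {g | ‖g‖ = 1})) ∧
  (∀ g, ‖g‖ ≤ C * sSup ((fun f => pair f g) '' {f | ‖f‖ = 1}))

noncomputable section
open scoped Classical
lemma dcube_eq_preimage (n : ℕ) (Q : DIdx n) : dcube n Q =
    (MeasurableEquiv.toLp 2 (Fin n → ℝ)).symm ⁻¹' (Set.univ.pi fun i =>
      Set.Ioo ((2:ℝ)^(-Q.1) * (Q.2 i : ℝ)) ((2:ℝ)^(-Q.1)*((Q.2 i : ℝ) + 1))) := by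
  ext x
  simp [dcube, Set.mem_pi]

lemma volume_dcube (n : ℕ) (Q : DIdx n) :
    volume (dcube n Q) = ENNReal.ofReal ((2:ℝ)^(-Q.1)) ^ n := by
  rw [dcube_eq_preimage,
    (EuclideanSpace.volume_preserving_symm_measurableEquiv_toLp (Fin n)).measure_preimage
      (MeasurableSet.univ_pi (fun i => measurableSet_Ioo)).nullMeasurableSet,
    volume_pi_pi]
  have : ∀ i : Fin n, volume (Set.Ioo ((2:ℝ)^(-Q.1) * (Q.2 i : ℝ))
      ((2:ℝ)^(-Q.1)*((Q.2 i : ℝ) + 1))) = ENNReal.ofReal ((2:ℝ)^(-Q.1)) := by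
    intro i
    rw [Real.volume_Ioo]
    ring_nf
  simp only [this, Finset.prod_const, Finset.card_univ, Fintype.card_fin]
lemma volume_dcube_pos (n : ℕ) (Q : DIdx n) : 0 < volume (dcube n Q) := by
  rw [volume_dcube]
  exact ENNReal.pow_pos (ENNReal.ofReal_pos.2 (zpow_pos (by norm_num) _)) n

lemma volume_dcube_ne_top (n : ℕ) (Q : DIdx n) : volume (dcube n Q) ≠ ∞ :=
  volume_dcube n Q ▸ (ENNReal.pow_ne_top ENNReal.ofReal_ne_top)

lemma nonempty_dcube (n : ℕ) (Q : DIdx n) : (dcube n Q).Nonempty := by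
  refine ⟨WithLp.toLp 2 (fun i => (2:ℝ)^(-Q.1) * ((Q.2 i : ℝ) + 2⁻¹)), fun i => ?_⟩
  constructor <;> nlinarith [zpow_pos (by norm_num : (0:ℝ) < 2) (-Q.1)]

-- 1d nesting
lemma Ioo_nest {j j' k k' : ℤ} (hj : j' ≤ j) {x : ℝ}
    (h1 : (2:ℝ)^(-j) * k < x ∧ x < (2:ℝ)^(-j) * (k+1))
    (h2 : (2:ℝ)^(-j') * k' < x ∧ x < (2:ℝ)^(-j') * (k'+1)) :
    ∀ y : ℝ, (2:ℝ)^(-j) * k < y ∧ y < (2:ℝ)^(-j) * (k+1) →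
      (2:ℝ)^(-j') * k' < y ∧ y < (2:ℝ)^(-j') * (k'+1) := by
  have h2pos : (0:ℝ) < 2 ^ (-j) := zpow_pos (by norm_num) _
  set d : ℕ := (j - j').toNat with hdd
  have hd : (2:ℝ)^(-j') = (2:ℝ)^(-j) * (2:ℝ)^d := by
    rw [← zpow_natCast (2:ℝ) d, ← zpow_add₀ (by norm_num : (2:ℝ) ≠ 0)]
    congr 1
    omega
  have A := h2.1
  have B := h2.2
  rw [hd, mul_assoc] at A B
  have r1 : (2:ℝ)^d * (k':ℝ) < (k:ℝ) + 1 :=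
    (mul_lt_mul_iff_right₀ h2pos).1 (A.trans h1.2)
  have r2 : (k:ℝ) < (2:ℝ)^d * ((k':ℝ) + 1) :=
    (mul_lt_mul_iff_right₀ h2pos).1 (h1.1.trans B)
  have key1 : (2:ℤ)^d * k' ≤ k := by
    have : ((2:ℤ)^d * k' : ℤ) < k + 1 := by exact_mod_cast (by push_cast; linarith : ((2:ℝ)^d * (k':ℝ) : ℝ) < ((k:ℤ):ℝ) + 1)
    omega
  have key2 : (k + 1 : ℤ) ≤ (2:ℤ)^d * (k' + 1) := by
    have : (k:ℤ) < (2:ℤ)^d * (k' + 1) := by exact_mod_cast (by push_cast; linarith : ((k:ℤ):ℝ) < (2:ℝ)^d * ((k':ℝ)+1))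
    omega
  have key1R : (2:ℝ)^d * (k':ℝ) ≤ (k:ℝ) := by exact_mod_cast key1
  have key2R : (k:ℝ) + 1 ≤ (2:ℝ)^d * ((k':ℝ) + 1) := by exact_mod_cast key2
  have l1 : (2:ℝ)^(-j') * k' ≤ (2:ℝ)^(-j) * k := by
    rw [hd, mul_assoc]
    exact mul_le_mul_of_nonneg_left key1R h2pos.le
  have l2 : (2:ℝ)^(-j) * ((k:ℝ)+1) ≤ (2:ℝ)^(-j') * ((k':ℝ)+1) := by
    rw [hd, mul_assoc]
    exact mul_le_mul_of_nonneg_left key2R h2pos.le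
  exact fun y hy => ⟨lt_of_le_of_lt l1 hy.1, lt_of_lt_of_le hy.2 l2⟩

lemma dcube_nest {n : ℕ} {Q Q' : DIdx n} (hj : Q'.1 ≤ Q.1) {x : EuclideanSpace ℝ (Fin n)}
    (hx : x ∈ dcube n Q) (hx' : x ∈ dcube n Q') : dcube n Q ⊆ dcube n Q' := by
  intro y hy i
  exact Ioo_nest hj (hx i) (hx' i) (y i) (hy i)
lemma mem_dcube_iff {n : ℕ} {Q : DIdx n} {x : EuclideanSpace ℝ (Fin n)} :
    x ∈ dcube n Q ↔ ∀ i, (2:ℝ) ^ (-Q.1) * (Q.2 i : ℝ) < x i ∧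
      x i < (2:ℝ) ^ (-Q.1) * ((Q.2 i : ℝ) + 1) := Iff.rfl

lemma scale_le_of_subset {n : ℕ} (hn : 0 < n) {R Q : DIdx n}
    (h : dcube n R ⊆ dcube n Q) : Q.1 ≤ R.1 := by
  by_contra hlt
  push_neg at hlt
  have h1 : (2:ℝ)^(-Q.1) < (2:ℝ)^(-R.1) := by
    apply zpow_lt_zpow_right₀ (by norm_num) (by omega)
  have h2 : volume (dcube n Q) < volume (dcube n R) := by
    rw [volume_dcube, volume_dcube]
    exact ENNReal.pow_lt_pow_left (by omega)
      (ENNReal.ofReal_lt_ofReal_iff_of_nonneg (by positivity) |>.2 h1)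
  exact absurd (measure_mono h) (not_le.2 h2)

lemma eq_of_scale_eq_mem {n : ℕ} {Q Q' : DIdx n} (hj : Q.1 = Q'.1)
    {x : EuclideanSpace ℝ (Fin n)} (hx : x ∈ dcube n Q) (hx' : x ∈ dcube n Q') : Q = Q' := by
  have h2pos : (0:ℝ) < 2 ^ (-Q.1) := zpow_pos (by norm_num) _
  refine Prod.ext hj (funext fun i => ?_)
  have h1 := hx i
  have h2 := hx' i
  rw [← hj] at h2
  have a1 : (Q.2 i : ℝ) < (Q'.2 i : ℝ) + 1 :=
    (mul_lt_mul_iff_right₀ h2pos).1 (h1.1.trans h2.2)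
  have a2 : (Q'.2 i : ℝ) < (Q.2 i : ℝ) + 1 :=
    (mul_lt_mul_iff_right₀ h2pos).1 (h2.1.trans h1.2)
  have : Q.2 i < Q'.2 i + 1 := by exact_mod_cast a1
  have : Q'.2 i < Q.2 i + 1 := by exact_mod_cast a2
  omega

lemma measurableSet_dcube {n : ℕ} (Q : DIdx n) : MeasurableSet (dcube n Q) := by
  rw [dcube_eq_preimage]
  exact (MeasurableEquiv.toLp 2 (Fin n → ℝ)).symm.measurable
    (MeasurableSet.univ_pi fun i => measurableSet_Ioo)

lemma volume_eval_eq_zero (n : ℕ) (i : Fin n) (c : ℝ) :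
    volume {x : EuclideanSpace ℝ (Fin n) | x i = c} = 0 := by
  classical
  have hset : {x : EuclideanSpace ℝ (Fin n) | x i = c} =
      (MeasurableEquiv.toLp 2 (Fin n → ℝ)).symm ⁻¹'
        (Set.univ.pi fun j => if j = i then {c} else Set.univ) := by
    ext x
    simp only [Set.mem_preimage, Set.mem_pi, Set.mem_univ, forall_true_left, Set.mem_setOf_eq]
    constructor
    · intro h j
      by_cases hji : j = i <;> simp [hji, h]
    · intro h
      have := h i
      simpa using this
  rw [hset, (EuclideanSpace.volume_preserving_symm_measurableEquiv_toLp (Fin n)).measure_preimage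
    (MeasurableSet.univ_pi fun j => by
      by_cases hji : j = i <;> simp [hji]).nullMeasurableSet, volume_pi_pi]
  refine Finset.prod_eq_zero (Finset.mem_univ i) ?_
  simp

lemma ae_exists_cube (n : ℕ) (m : ℤ) :
    ∀ᵐ x : EuclideanSpace ℝ (Fin n), ∃ k, x ∈ dcube n (m, k) := by
  have hB : volume (⋃ (i : Fin n) (q : ℤ),
      {x : EuclideanSpace ℝ (Fin n) | x i = (2:ℝ)^(-m) * q}) = 0 := by
    refine measure_iUnion_null fun i => measure_iUnion_null fun q => ?_
    exact volume_eval_eq_zero n i _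
  rw [MeasureTheory.ae_iff]
  refine measure_mono_null ?_ hB
  intro x hx
  simp only [Set.mem_setOf_eq, not_exists] at hx
  by_contra hxB
  simp only [Set.mem_iUnion, Set.mem_setOf_eq, not_exists] at hxB
  apply hx (fun i => ⌊(2:ℝ)^(m:ℤ) * x i⌋)
  intro i
  have h2pos : (0:ℝ) < 2 ^ (m:ℤ) := zpow_pos (by norm_num) _
  have hco : ∀ y : ℝ, (2:ℝ)^(-m) * y = ((2:ℝ)^(m:ℤ))⁻¹ * y := by
    intro y; rw [zpow_neg]
  have hne : (2:ℝ)^(m:ℤ) * x i ≠ (⌊(2:ℝ)^(m:ℤ) * x i⌋ : ℝ) := by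
    intro heq
    apply hxB i ⌊(2:ℝ)^(m:ℤ) * x i⌋
    rw [hco]
    rw [← heq, inv_mul_cancel_left₀ h2pos.ne']
  constructor
  · rw [hco, inv_mul_lt_iff₀ h2pos]
    exact lt_of_le_of_ne (Int.floor_le _) (Ne.symm hne)
  · rw [hco, lt_inv_mul_iff₀ h2pos]
    exact Int.lt_floor_add_one _

def Tw (n : ℕ) (w : DIdx n → ℝ≥0∞) (Q : DIdx n) : ℝ≥0∞ :=
  ∑' R : DIdx n, if dcube n R ⊆ dcube n Q then w R else 0

lemma Tw_congr {n : ℕ} {w w' : DIdx n → ℝ≥0∞} (h : ∀ R, w R = w' R) (Q : DIdx n) :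
    Tw n w Q = Tw n w' Q :=
  tsum_congr fun R => by rw [h R]

lemma Tw_mono_w {n : ℕ} {w w' : DIdx n → ℝ≥0∞} (h : ∀ R, w R ≤ w' R) (Q : DIdx n) :
    Tw n w Q ≤ Tw n w' Q := by
  refine ENNReal.tsum_le_tsum fun R => ?_
  split_ifs
  · exact h R
  · exact le_rfl

lemma Tw_mono_Q {n : ℕ} (w : DIdx n → ℝ≥0∞) {Q Q' : DIdx n}
    (h : dcube n Q ⊆ dcube n Q') : Tw n w Q ≤ Tw n w Q' := by
  refine ENNReal.tsum_le_tsum fun R => ?_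
  split_ifs with h1 h2
  · exact le_rfl
  · exact absurd (h1.trans h) h2
  · exact zero_le
  · exact le_rfl

def supform (n : ℕ) (c : DIdx n → ℝ≥0∞) (x : EuclideanSpace ℝ (Fin n)) : ℝ≥0∞ :=
  ⨆ Q, ⨆ _ : x ∈ dcube n Q, c Q

lemma measurable_supform (n : ℕ) (c : DIdx n → ℝ≥0∞) : Measurable (supform n c) := by
  refine Measurable.iSup fun Q => ?_
  have : (fun x => ⨆ _ : x ∈ dcube n Q, c Q) = (dcube n Q).indicator (fun _ => c Q) := by
    funext x
    by_cases h : x ∈ dcube n Q <;> simp [h]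
  rw [this]
  exact measurable_const.indicator (measurableSet_dcube Q)

lemma le_supform {n : ℕ} {c : DIdx n → ℝ≥0∞} {x : EuclideanSpace ℝ (Fin n)} {Q : DIdx n}
    (hx : x ∈ dcube n Q) : c Q ≤ supform n c x := by
  refine le_trans ?_ (le_iSup _ Q)
  rw [iSup_pos hx]

lemma supform_le {n : ℕ} {c : DIdx n → ℝ≥0∞} {x : EuclideanSpace ℝ (Fin n)} {b : ℝ≥0∞}
    (h : ∀ Q, x ∈ dcube n Q → c Q ≤ b) : supform n c x ≤ b :=
  iSup_le fun Q => iSup_le fun hx => h Q hx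

lemma supform_mono {n : ℕ} {c c' : DIdx n → ℝ≥0∞} (h : ∀ Q, c Q ≤ c' Q)
    (x : EuclideanSpace ℝ (Fin n)) : supform n c x ≤ supform n c' x :=
  supform_le fun Q hx => le_trans (h Q) (le_supform hx)

/-- The covering lemma: the union of dyadic cubes `Q ⊆ P` on which the averaged
tail sum exceeds `c` has volume at most `c⁻¹ * Tw w P`. -/
lemma covering {n : ℕ} (hn : 0 < n) (w : DIdx n → ℝ≥0∞) (P : DIdx n) (c : ℝ≥0∞)
    (hc0 : c ≠ 0) (hctop : c ≠ ∞) :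
    volume (⋃ (Q : DIdx n) (_ : dcube n Q ⊆ dcube n P ∧
      c * volume (dcube n Q) < Tw n w Q), dcube n Q) ≤ c⁻¹ * Tw n w P := by
  set cond : DIdx n → Prop :=
    fun Q => dcube n Q ⊆ dcube n P ∧ c * volume (dcube n Q) < Tw n w Q with hcond
  set Max : DIdx n → Prop := fun Q => cond Q ∧ ∀ Q', cond Q' → dcube n Q ⊆ dcube n Q' → Q = Q'
    with hMax
  -- every cond cube is inside a maximal one
  have exists_max : ∀ Q, cond Q → ∃ Q', Max Q' ∧ dcube n Q ⊆ dcube n Q' := by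
    intro Q hQ
    obtain ⟨lb, ⟨Q', hQ', hQ'1⟩, hlb⟩ := Int.exists_least_of_bdd
      (P := fun j => ∃ Q', (cond Q' ∧ dcube n Q ⊆ dcube n Q') ∧ Q'.1 = j)
      ⟨P.1, fun z ⟨Q', hQ', hz⟩ => hz ▸ scale_le_of_subset hn hQ'.1.1⟩
      ⟨Q.1, Q, ⟨hQ, le_rfl⟩, rfl⟩
    refine ⟨Q', ⟨hQ'.1, fun Q'' hQ'' hsub => ?_⟩, hQ'.2⟩
    have h1 : lb ≤ Q''.1 := hlb _ ⟨Q'', ⟨hQ'', hQ'.2.trans hsub⟩, rfl⟩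
    have h2 : Q''.1 ≤ Q'.1 := scale_le_of_subset hn hsub
    obtain ⟨y, hy⟩ := nonempty_dcube n Q'
    exact eq_of_scale_eq_mem (by omega) hy (hsub hy)
  -- maximal cubes are pairwise disjoint
  have disj : ∀ Q₁ Q₂, Max Q₁ → Max Q₂ → Q₁ ≠ Q₂ → Disjoint (dcube n Q₁) (dcube n Q₂) := by
    intro Q₁ Q₂ h1 h2 hne
    rw [Set.disjoint_iff_inter_eq_empty]
    by_contra hint
    obtain ⟨x, hx1, hx2⟩ := Set.nonempty_iff_ne_empty.2 hint
    rcases le_total Q₂.1 Q₁.1 with h | h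
    · exact hne (h1.2 Q₂ h2.1 (dcube_nest h hx1 hx2))
    · exact hne (h2.2 Q₁ h1.1 (dcube_nest h hx2 hx1)).symm
  -- the union is inside the union over maximal cubes
  have hsub : (⋃ (Q : DIdx n) (_ : cond Q), dcube n Q) ⊆
      ⋃ Q ∈ {Q | Max Q}, dcube n Q := by
    intro x hx
    simp only [Set.mem_iUnion] at hx ⊢
    obtain ⟨Q, hQ, hxQ⟩ := hx
    obtain ⟨Q', hQ', hsub⟩ := exists_max Q hQ
    exact ⟨Q', hQ', hsub hxQ⟩
  refine le_trans (measure_mono hsub) ?_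
  refine le_trans (measure_biUnion_le volume (Set.to_countable _) _) ?_
  -- bound the sum of volumes
  have hvol : ∀ Q : {Q | Max Q}, volume (dcube n Q.1) ≤ c⁻¹ * Tw n w Q.1 := by
    rintro ⟨Q, hQ⟩
    have := hQ.1.2.le
    calc volume (dcube n Q) = c⁻¹ * (c * volume (dcube n Q)) := by
          rw [← mul_assoc, ENNReal.inv_mul_cancel hc0 hctop, one_mul]
      _ ≤ c⁻¹ * Tw n w Q := mul_le_mul_right this _
  refine le_trans (ENNReal.tsum_le_tsum hvol) ?_
  rw [ENNReal.tsum_mul_left]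
  refine mul_le_mul_right ?_ _
  -- key: sum of Tw over disjoint maximal cubes is at most Tw on P
  have key : ∀ R : DIdx n, (∑' Q : {Q | Max Q}, if dcube n R ⊆ dcube n Q.1 then w R else 0)
      ≤ if dcube n R ⊆ dcube n P then w R else 0 := by
    intro R
    by_cases hex : ∃ Q₀ : {Q | Max Q}, dcube n R ⊆ dcube n Q₀.1
    · obtain ⟨Q₀, hQ₀⟩ := hex
      rw [tsum_eq_single Q₀ ?_]
      · rw [if_pos hQ₀, if_pos (hQ₀.trans Q₀.2.1.1)]
      · intro Q hne
        rw [if_neg]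
        intro hsubQ
        obtain ⟨y, hy⟩ := nonempty_dcube n R
        have hd := disj Q.1 Q₀.1 Q.2 Q₀.2 (fun h => hne (Subtype.ext h))
        exact absurd (Set.mem_inter (hsubQ hy) (hQ₀ hy))
          (by rw [Set.disjoint_iff_inter_eq_empty.1 hd]; exact Set.notMem_empty y)
    · push_neg at hex
      have hz : ∀ Q : {Q | Max Q}, (if dcube n R ⊆ dcube n Q.1 then w R else 0) = 0 :=
        fun Q => if_neg (hex Q)
      rw [tsum_congr hz, tsum_zero]
      exact zero_le
  calc ∑' Q : {Q | Max Q}, Tw n w Q.1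
      = ∑' R : DIdx n, ∑' Q : {Q | Max Q}, (if dcube n R ⊆ dcube n Q.1 then w R else 0) :=
        ENNReal.tsum_comm
    _ ≤ ∑' R : DIdx n, (if dcube n R ⊆ dcube n P then w R else 0) := ENNReal.tsum_le_tsum key
    _ = Tw n w P := rfl

lemma tail_small {α : Type*} (f : α → ℕ) {w : α → ℝ≥0∞} (hw : ∑' x, w x ≠ ∞)
    {η : ℝ≥0∞} (hη : 0 < η) : ∃ k : ℕ, ∑' x, (if f x < k then 0 else w x) < η := by
  have ht := ENNReal.tendsto_tsum_compl_atTop_zero hw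
  obtain ⟨s, hs⟩ := ((tendsto_order.1 ht).2 η hη).exists
  refine ⟨s.sup f + 1, ?_⟩
  refine lt_of_le_of_lt ?_ hs
  have heq : ∑' (b : {x : α // x ∉ s}), w b.1 = ∑' x, Set.indicator {x : α | x ∉ s} w x :=
    tsum_subtype _ _
  rw [heq]
  refine ENNReal.tsum_le_tsum fun x => ?_
  by_cases hx : f x < s.sup f + 1
  · simp [hx]
  · have hxs : x ∉ s := fun hmem => hx (Nat.lt_succ_of_le (Finset.le_sup hmem))
    rw [if_neg hx, Set.indicator_of_mem (by simpa using hxs) w]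

lemma CY_eq {n : ℕ} {Y : DIdx n → Type*} [∀ Q, NormedAddCommGroup (Y Q)] (g : ∀ Q, Y Q) :
    CY g = supform n
      (fun Q => (volume (dcube n Q))⁻¹ * Tw n (fun R => (‖g R‖₊ : ℝ≥0∞)) Q) := by
  funext x
  refine iSup_congr fun Q => iSup_congr fun _ => ?_
  congr 1
  rw [Tw]
  refine Eq.trans
    (tsum_subtype {R : DIdx n | dcube n R ⊆ dcube n Q} (fun R => ((‖g R‖₊ : ℝ≥0∞))))
    (tsum_congr fun R => ?_)
  by_cases h : dcube n R ⊆ dcube n Q <;> simp [h]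

end

/-- Lemma 2.5: for `1 < p' < ∞`, the finitely non-zero sequences are dense in `Y_{p'}`. -/
theorem stmt9 (n : ℕ) (p' : ℝ≥0∞) (hp1 : 1 < p') (hptop : p' ≠ ∞)
    (Y : DIdx n → Type)
    [∀ Q, NormedAddCommGroup (Y Q)] [∀ Q, NormedSpace ℝ (Y Q)] [∀ Q, CompleteSpace (Y Q)]
    (g : ∀ Q, Y Q) (hg : eLp p' (CY g) volume ≠ ∞)
    (ε : ℝ≥0∞) (hε : 0 < ε) :
    ∃ g' : ∀ Q, Y Q, {Q | g' Q ≠ 0}.Finite ∧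
      eLp p' (CY (fun Q => g Q - g' Q)) volume < ε := by
  classical
  -- basic exponent facts
  set pr : ℝ := p'.toReal with hprdef
  have hpr0 : 0 < pr := ENNReal.toReal_pos (by intro h; rw [h] at hp1; exact absurd hp1 (by simp)) hptop
  have hpr1 : 1 ≤ pr := by
    have := ENNReal.toReal_mono hptop hp1.le
    simpa using this
  have heLp : ∀ (F : EuclideanSpace ℝ (Fin n) → ℝ≥0∞),
      eLp p' F volume = (∫⁻ x, F x ^ pr) ^ pr⁻¹ := by
    intro F
    rw [eLp, if_neg hptop]
  -- dispose of the case ε = ∞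
  by_cases hεtop : ε = ∞
  · refine ⟨0, by simp, ?_⟩
    have : (fun Q => g Q - (0 : ∀ Q, Y Q) Q) = g := by funext Q; simp
    rw [this, hεtop]
    exact lt_top_iff_ne_top.2 hg
  -- total integral is finite
  have hItot : (∫⁻ x, CY g x ^ pr) ≠ ∞ := by
    intro h
    rw [heLp, h, ENNReal.top_rpow_of_pos (by positivity)] at hg
    exact hg rfl
  -- weights
  set w0 : DIdx n → ℝ≥0∞ := fun R => (‖g R‖₊ : ℝ≥0∞) with hw0
  have hCY : CY g = supform n (fun Q => (volume (dcube n Q))⁻¹ * Tw n w0 Q) := CY_eq g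
  obtain ⟨enc, henc⟩ : ∃ f : DIdx n → ℕ, Function.Injective f :=
    Countable.exists_injective_nat (DIdx n)
  set Fs : ℕ → Set (DIdx n) := fun k => {R | enc R < k} with hFs
  have hFsfin : ∀ k, (Fs k).Finite := by
    intro k
    exact Set.Finite.preimage (henc.injOn) (Set.finite_Iio k)
  set wk : ℕ → DIdx n → ℝ≥0∞ := fun k R => if R ∈ Fs k then 0 else w0 R with hwk
  set g' : ℕ → ∀ Q, Y Q := fun k Q => if Q ∈ Fs k then g Q else 0 with hg'
  have hgfin : ∀ k, {Q | g' k Q ≠ 0}.Finite := by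
    intro k
    refine (hFsfin k).subset fun Q hQ => ?_
    simp only [hg', Set.mem_setOf_eq] at hQ ⊢
    by_contra hQk
    exact hQ (by rw [if_neg hQk])
  have hCYk : ∀ k, CY (fun Q => g Q - g' k Q)
      = supform n (fun Q => (volume (dcube n Q))⁻¹ * Tw n (wk k) Q) := by
    intro k
    rw [CY_eq]
    refine congrArg (supform n) (funext fun Q => ?_)
    refine congrArg _ (Tw_congr (fun R => ?_) Q)
    simp only [hg', hwk, hw0]
    by_cases h : R ∈ Fs k <;> simp [h]
  -- the case n = 0
  by_cases hn0 : n = 0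
  · subst hn0
    have hcube : ∀ Q : DIdx 0, dcube 0 Q = Set.univ :=
      fun Q => Set.eq_univ_of_forall (fun x i => i.elim0)
    have hvol1 : ∀ Q : DIdx 0, volume (dcube 0 Q) = 1 := by
      intro Q
      rw [volume_dcube]
      simp
    set S : ℕ → ℝ≥0∞ := fun k => ∑' R : DIdx 0, wk k R with hSdef
    set S0 : ℝ≥0∞ := ∑' R : DIdx 0, w0 R with hS0def
    have hTw : ∀ (w : DIdx 0 → ℝ≥0∞) (Q : DIdx 0), Tw 0 w Q = ∑' R : DIdx 0, w R := by
      intro w Q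
      refine tsum_congr fun R => ?_
      rw [if_pos (by rw [hcube, hcube])]
    have hconst : ∀ (w : DIdx 0 → ℝ≥0∞) (x : EuclideanSpace ℝ (Fin 0)),
        supform 0 (fun Q => (volume (dcube 0 Q))⁻¹ * Tw 0 w Q) x = ∑' R : DIdx 0, w R := by
      intro w x
      refine le_antisymm (supform_le fun Q _ => ?_) ?_
      · rw [hvol1, hTw]; simp
      · have hx : x ∈ dcube 0 (0, fun i => i.elim0) := by rw [hcube]; trivial
        refine le_trans (le_of_eq ?_) (le_supform hx)
        rw [hvol1, hTw]; simp
    have heval : ∀ (w : DIdx 0 → ℝ≥0∞),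
        eLp p' (supform 0 (fun Q => (volume (dcube 0 Q))⁻¹ * Tw 0 w Q)) volume
          = ∑' R : DIdx 0, w R := by
      intro w
      rw [heLp]
      have : ∀ x : EuclideanSpace ℝ (Fin 0),
          supform 0 (fun Q => (volume (dcube 0 Q))⁻¹ * Tw 0 w Q) x ^ pr
            = (∑' R : DIdx 0, w R) ^ pr := fun x => by rw [hconst]
      rw [lintegral_congr this, lintegral_const]
      have huniv : volume (Set.univ : Set (EuclideanSpace ℝ (Fin 0))) = 1 := by
        rw [← hcube (0, fun i => i.elim0), hvol1]
      rw [huniv, mul_one, ← ENNReal.rpow_mul, mul_inv_cancel₀ hpr0.ne', ENNReal.rpow_one]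
    have hS0 : S0 ≠ ∞ := by
      rw [hS0def]
      intro h
      rw [hCY, heval] at hg
      exact hg h
    obtain ⟨k, hk⟩ := tail_small enc hS0 hε
    refine ⟨g' k, hgfin k, ?_⟩
    rw [hCYk, heval]
    refine lt_of_le_of_lt (le_of_eq ?_) hk
    refine tsum_congr fun R => ?_
    simp only [hwk, hFs, Set.mem_setOf_eq]
  have hn : 0 < n := Nat.pos_of_ne_zero hn0
  have mCY : Measurable (CY g) := by rw [hCY]; exact measurable_supform n _
  have mCYpr : Measurable fun y => CY g y ^ pr :=
    ENNReal.continuous_rpow_const.measurable.comp mCY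
  have fact1 : ∀ Q : DIdx n, ∀ y ∈ dcube n Q,
      (volume (dcube n Q))⁻¹ * Tw n w0 Q ≤ CY g y := by
    intro Q y hy
    rw [hCY]
    exact le_supform hy
  have hae : ∀ᵐ y : EuclideanSpace ℝ (Fin n), CY g y < ∞ := by
    filter_upwards [ae_lt_top mCYpr hItot] with y hy
    by_contra htop
    rw [not_lt, top_le_iff] at htop
    rw [htop, ENNReal.top_rpow_of_pos hpr0] at hy
    exact absurd hy (by simp)
  have fact2 : ∀ Q : DIdx n, Tw n w0 Q ≠ ∞ := by
    intro Q htop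
    have hv0 : (volume (dcube n Q))⁻¹ ≠ 0 := by
      simp [volume_dcube_ne_top n Q]
    have hsub : dcube n Q ⊆ {y | ¬ CY g y < ∞} := by
      intro y hy
      have h1 := fact1 Q y hy
      rw [htop, ENNReal.mul_top hv0, top_le_iff] at h1
      simp [h1]
    have := measure_mono_null hsub hae
    exact absurd this (volume_dcube_pos n Q).ne'
  -- the "large cubes" part of the Carleson functional
  set B : ℕ → EuclideanSpace ℝ (Fin n) → ℝ≥0∞ := fun m => supform n
    (fun Q => if Q.1 < -(m:ℤ) then (volume (dcube n Q))⁻¹ * Tw n w0 Q else 0) with hBdef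
  have mB : ∀ m, Measurable (B m) := fun m => measurable_supform n _
  have hBle : ∀ m x, B m x ≤ CY g x := by
    intro m x
    rw [hCY]
    refine supform_mono (fun Q => ?_) x
    split_ifs
    · exact le_rfl
    · exact zero_le
  have hBanti : ∀ x, Antitone fun m => B m x := by
    intro x m m' hmm'
    refine supform_mono (fun Q => ?_) x
    split_ifs with h1 h2
    · exact le_rfl
    · refine absurd (lt_of_lt_of_le h1 ?_) h2
      have : (m:ℤ) ≤ (m':ℤ) := Int.ofNat_le.2 hmm'
      omega
    · exact zero_le
    · exact le_rfl
  -- the error budget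
  set δ0 : ℝ≥0∞ := ε ^ pr / ((2:ℝ≥0∞) ^ pr * 4) with hδ0def
  have h2pr0 : ((2:ℝ≥0∞) ^ pr) ≠ 0 := by
    simp [ENNReal.rpow_eq_zero_iff]
  have h2prtop : ((2:ℝ≥0∞) ^ pr) ≠ ∞ := by
    simp [ENNReal.rpow_eq_top_iff, hpr0, hpr0.not_gt]
  have hεpr0 : ε ^ pr ≠ 0 := by
    simp [ENNReal.rpow_eq_zero_iff, hε.ne', hpr0.not_gt]
  have hεprtop : ε ^ pr ≠ ∞ := by
    simp [ENNReal.rpow_eq_top_iff, hεtop, hpr0.not_gt]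
  have hδ0pos : 0 < δ0 := by
    rw [hδ0def]
    exact ENNReal.div_pos hεpr0 (by finiteness)
  -- Step 1: choose the level c
  obtain ⟨c, hc0, hctop, hcmin⟩ : ∃ c : ℝ≥0∞, 0 < c ∧ c ≠ ∞ ∧
      (∫⁻ x, min (CY g x) c ^ pr) < δ0 := by
    have hmeas : ∀ j : ℕ, Measurable fun x => min (CY g x) ((j:ℝ≥0∞)⁻¹) ^ pr := fun j =>
      ENNReal.continuous_rpow_const.measurable.comp (mCY.min measurable_const)
    have hlim : Filter.Tendsto (fun j : ℕ => ∫⁻ x, min (CY g x) ((j:ℝ≥0∞)⁻¹) ^ pr)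
        Filter.atTop (nhds 0) := by
      have h0 : (0:ℝ≥0∞) = ∫⁻ (_ : EuclideanSpace ℝ (Fin n)), 0 := by simp
      rw [h0]
      refine tendsto_lintegral_of_dominated_convergence (fun x => CY g x ^ pr) hmeas
        (fun j => Filter.Eventually.of_forall fun x =>
          ENNReal.rpow_le_rpow (min_le_left _ _) hpr0.le) hItot
        (Filter.Eventually.of_forall fun x => ?_)
      have hub : Filter.Tendsto (fun j : ℕ => ((j:ℝ≥0∞)⁻¹) ^ pr) Filter.atTop (nhds 0) := by
        have := (ENNReal.tendsto_inv_nat_nhds_zero).ennrpow_const pr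
        rwa [ENNReal.zero_rpow_of_pos hpr0] at this
      refine tendsto_of_tendsto_of_tendsto_of_le_of_le tendsto_const_nhds hub
        (fun j => zero_le) (fun j => ENNReal.rpow_le_rpow (min_le_right _ _) hpr0.le)
    obtain ⟨j, hj, hj1⟩ := (((tendsto_order.1 hlim).2 δ0 hδ0pos).and
      (Filter.eventually_ge_atTop 1)).exists
    refine ⟨(j:ℝ≥0∞)⁻¹, ENNReal.inv_pos.2 (by simp), ?_, hj⟩
    simp only [ne_eq, ENNReal.inv_eq_top, Nat.cast_eq_zero]
    exact Nat.one_le_iff_ne_zero.1 hj1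
  -- Step 2: choose the scale m
  set ν : Measure (EuclideanSpace ℝ (Fin n)) :=
    volume.withDensity (fun x => CY g x ^ pr) with hνdef
  set A : ℕ → Set (EuclideanSpace ℝ (Fin n)) := fun m => {x | c < B m x} with hAdef
  have mA : ∀ m, MeasurableSet (A m) := fun m => measurableSet_lt measurable_const (mB m)
  have hνA : ∀ m, ν (A m) = ∫⁻ x in A m, CY g x ^ pr := fun m => withDensity_apply _ (mA m)
  have hAanti : Antitone A := by
    intro m m' hmm' x hx
    exact lt_of_lt_of_le hx (hBanti x hmm')
  have hAiInter : (⋂ m, A m) = ∅ := by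
    by_contra hne
    obtain ⟨x, hx⟩ := Set.nonempty_iff_ne_empty.2 hne
    simp only [Set.mem_iInter, hAdef, Set.mem_setOf_eq] at hx
    -- for every m there is a huge cube on which CY g > c
    have hbig : ∀ m : ℕ, ((2:ℝ≥0∞)^m) ≤ volume {y | c < CY g y} := by
      intro m
      have hxm := hx m
      rw [hBdef] at hxm
      obtain ⟨Q, hQ⟩ := lt_iSup_iff.1 hxm
      obtain ⟨hxQ, hQ2⟩ := lt_iSup_iff.1 hQ
      beta_reduce at hQ2
      · by_cases hcond : Q.1 < -(m:ℤ)
        · rw [if_pos hcond] at hQ2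
          have hsub : dcube n Q ⊆ {y | c < CY g y} := fun y hy =>
            lt_of_lt_of_le hQ2 (fact1 Q y hy)
          refine le_trans ?_ (measure_mono hsub)
          rw [volume_dcube]
          have h1 : ((2:ℝ≥0∞)^m) = ENNReal.ofReal ((2:ℝ)^(m:ℤ)) := by
            rw [zpow_natCast, ENNReal.ofReal_pow (by norm_num : (0:ℝ) ≤ 2) m,
              ENNReal.ofReal_ofNat]
          have h2 : ENNReal.ofReal ((2:ℝ)^(m:ℤ)) ≤ ENNReal.ofReal ((2:ℝ)^(-Q.1)) := by
            refine ENNReal.ofReal_le_ofReal ?_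
            refine zpow_le_zpow_right₀ (by norm_num) (by omega)
          have h3 : ENNReal.ofReal ((2:ℝ)^(-Q.1)) ≤ ENNReal.ofReal ((2:ℝ)^(-Q.1)) ^ n := by
            conv_lhs => rw [← pow_one (ENNReal.ofReal ((2:ℝ)^(-Q.1)))]
            refine pow_le_pow_right₀ ?_ hn
            rw [← ENNReal.ofReal_one]
            refine ENNReal.ofReal_le_ofReal (one_le_zpow₀ (by norm_num) (by omega))
          rw [h1]
          exact h2.trans h3
        · rw [if_neg hcond] at hQ2
          exact absurd hQ2 (by simp)
    have hinfty : volume {y | c < CY g y} = ∞ := by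
      by_contra hfin
      obtain ⟨k, hk⟩ := ENNReal.exists_nat_gt hfin
      have h2k : (k:ℝ≥0∞) ≤ (2:ℝ≥0∞)^k := by
        have := Nat.lt_two_pow_self (n := k)
        exact_mod_cast this.le
      exact absurd ((hbig k).trans_lt' (hk.trans_le h2k)) (lt_irrefl _)
    have hcheb : (c ^ pr) * volume {y | c < CY g y} ≤ ∫⁻ x, CY g x ^ pr := by
      rw [← lintegral_indicator_const (measurableSet_lt measurable_const mCY) (c ^ pr)]
      refine lintegral_mono fun y => ?_
      by_cases hy : y ∈ {y | c < CY g y}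
      · rw [Set.indicator_of_mem hy]
        exact ENNReal.rpow_le_rpow (le_of_lt hy) hpr0.le
      · rw [Set.indicator_of_notMem hy]
        exact zero_le
    rw [hinfty, ENNReal.mul_top (by
      simp [ENNReal.rpow_eq_zero_iff, hc0.ne', hpr0.not_gt])] at hcheb
    exact hItot (top_le_iff.1 hcheb)
  have hνuniv : ν Set.univ = ∫⁻ x, CY g x ^ pr := by
    rw [hνdef, withDensity_apply _ MeasurableSet.univ, Measure.restrict_univ]
  have hν0 : ν (A 0) ≠ ∞ :=
    ne_top_of_le_ne_top (hνuniv ▸ hItot) (measure_mono (Set.subset_univ _))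
  obtain ⟨m, hm⟩ : ∃ m : ℕ, ν (A m) < δ0 := by
    have := tendsto_measure_iInter_atTop (μ := ν)
      (fun m => (mA m).nullMeasurableSet) hAanti ⟨0, hν0⟩
    rw [hAiInter] at this
    simp only [measure_empty] at this
    exact ((tendsto_order.1 this).2 δ0 hδ0pos).exists
  have hintB : (∫⁻ x, B m x ^ pr) < δ0 + δ0 := by
    have hpt : ∀ x, B m x ^ pr ≤
        (A m).indicator (fun x => CY g x ^ pr) x + min (CY g x) c ^ pr := by
      intro x
      by_cases hx : x ∈ A m
      · rw [Set.indicator_of_mem hx]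
        exact le_add_right (ENNReal.rpow_le_rpow (hBle m x) hpr0.le)
      · rw [Set.indicator_of_notMem hx]
        rw [hAdef, Set.mem_setOf_eq, not_lt] at hx
        refine le_add_left (ENNReal.rpow_le_rpow (le_min (hBle m x) hx) hpr0.le)
    calc (∫⁻ x, B m x ^ pr)
        ≤ ∫⁻ x, ((A m).indicator (fun x => CY g x ^ pr) x + min (CY g x) c ^ pr) :=
          lintegral_mono hpt
      _ = (∫⁻ x, (A m).indicator (fun x => CY g x ^ pr) x) + ∫⁻ x, min (CY g x) c ^ pr :=
          lintegral_add_left (mCYpr.indicator (mA m)) _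
      _ = ν (A m) + ∫⁻ x, min (CY g x) c ^ pr := by
          rw [lintegral_indicator (mA m), hνA]
      _ < δ0 + δ0 := ENNReal.add_lt_add hm hcmin
  -- Step 3: the small-scale part
  set H : ℕ → EuclideanSpace ℝ (Fin n) → ℝ≥0∞ := fun k => supform n
    (fun Q => if -(m:ℤ) ≤ Q.1 then (volume (dcube n Q))⁻¹ * Tw n (wk k) Q else 0) with hHdef
  have mH : ∀ k, Measurable (H k) := fun k => measurable_supform n _
  have hwk_le : ∀ k R, wk k R ≤ w0 R := by
    intro k R
    simp only [hwk]
    split_ifs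
    · exact zero_le
    · exact le_rfl
  have hHle : ∀ k x, H k x ≤ CY g x := by
    intro k x
    rw [hCY]
    refine supform_mono (fun Q => ?_) x
    split_ifs
    · exact mul_le_mul_right (Tw_mono_w (hwk_le k) Q) _
    · exact zero_le
  have hHanti : ∀ x, Antitone fun k => H k x := by
    intro x k k' hkk'
    refine supform_mono (fun Q => ?_) x
    split_ifs
    · refine mul_le_mul_right (Tw_mono_w (fun R => ?_) Q) _
      simp only [hwk, hFs, Set.mem_setOf_eq]
      by_cases ha : enc R < k'
      · simp [ha]
      · rw [if_neg ha, if_neg (fun hb => ha (lt_of_lt_of_le hb hkk'))]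
    · exact le_rfl
  -- the covering argument: intersections of exceptional sets are null
  have hNP : ∀ (P : DIdx n) (j : ℕ), volume (⋂ k : ℕ, ⋃ (Q : DIdx n)
      (_ : dcube n Q ⊆ dcube n P ∧
        ((j:ℝ≥0∞)+1)⁻¹ * volume (dcube n Q) < Tw n (wk k) Q), dcube n Q) = 0 := by
    intro P j
    set cj : ℝ≥0∞ := ((j:ℝ≥0∞)+1)⁻¹ with hcj
    have hcj0 : cj ≠ 0 := by simp [hcj]
    have hcjtop : cj ≠ ∞ := by simp [hcj]
    set U : ℕ → Set (EuclideanSpace ℝ (Fin n)) := fun k => ⋃ (Q : DIdx n)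
      (_ : dcube n Q ⊆ dcube n P ∧ cj * volume (dcube n Q) < Tw n (wk k) Q), dcube n Q
      with hUdef
    by_contra hne
    have hUP : ∀ k, U k ⊆ dcube n P := by
      intro k x hx
      simp only [hUdef, Set.mem_iUnion] at hx
      obtain ⟨Q, hQ, hxQ⟩ := hx
      exact hQ.1 hxQ
    have hfull : (∑' R, (if dcube n R ⊆ dcube n P then w0 R else 0)) ≠ ∞ := fact2 P
    obtain ⟨k, hk⟩ := tail_small enc hfull
      (ENNReal.mul_pos hcj0 hne : 0 < cj * volume (⋂ k, U k))
    have htail : Tw n (wk k) P ≤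
        ∑' R, (if enc R < k then 0 else (if dcube n R ⊆ dcube n P then w0 R else 0)) := by
      refine ENNReal.tsum_le_tsum fun R => ?_
      simp only [hwk, hFs, Set.mem_setOf_eq]
      by_cases h1 : dcube n R ⊆ dcube n P <;> by_cases h2 : enc R < k <;> simp [h1, h2]
    have hvol : volume (⋂ k', U k') ≤ cj⁻¹ * Tw n (wk k) P :=
      le_trans (measure_mono (Set.iInter_subset U k)) (covering hn (wk k) P cj hcj0 hcjtop)
    have hlt : cj⁻¹ * Tw n (wk k) P < cj⁻¹ * (cj * volume (⋂ k', U k')) := by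
      refine ENNReal.mul_lt_mul_right (by simp [hcj]) (by simp [hcj, hcj0]) ?_
      exact lt_of_le_of_lt htail hk
    rw [← mul_assoc, ENNReal.inv_mul_cancel hcj0 hcjtop, one_mul] at hlt
    exact absurd (hvol.trans_lt hlt) (lt_irrefl _)
  -- a.e. convergence of the small-scale part
  have haeH : ∀ᵐ x : EuclideanSpace ℝ (Fin n),
      Filter.Tendsto (fun k => H k x) Filter.atTop (nhds 0) := by
    have hgrid := ae_exists_cube n (-(m:ℤ))
    have hnull : ∀ᵐ x : EuclideanSpace ℝ (Fin n), ∀ (κ : Fin n → ℤ) (j : ℕ),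
        x ∉ ⋂ k : ℕ, ⋃ (Q : DIdx n) (_ : dcube n Q ⊆ dcube n ((-(m:ℤ), κ) : DIdx n) ∧
          ((j:ℝ≥0∞)+1)⁻¹ * volume (dcube n Q) < Tw n (wk k) Q), dcube n Q := by
      rw [MeasureTheory.ae_iff]
      refine measure_mono_null (fun x hx => ?_)
        (measure_iUnion_null fun κ : Fin n → ℤ =>
          measure_iUnion_null fun j : ℕ => hNP ((-(m:ℤ), κ) : DIdx n) j)
      simp only [Set.mem_setOf_eq, not_forall, not_not] at hx
      obtain ⟨κ, j, hxin⟩ := hx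
      exact Set.mem_iUnion.2 ⟨κ, Set.mem_iUnion.2 ⟨j, hxin⟩⟩
    filter_upwards [hgrid, hnull] with x hx1 hx2
    obtain ⟨κ, hκ⟩ := hx1
    have key : ∀ j : ℕ, ∃ k, H k x ≤ ((j:ℝ≥0∞)+1)⁻¹ := by
      intro j
      have hx2' := hx2 κ j
      simp only [Set.mem_iInter, not_forall] at hx2'
      obtain ⟨k, hk⟩ := hx2'
      refine ⟨k, ?_⟩
      rw [hHdef]
      refine supform_le fun Q hxQ => ?_
      split_ifs with hscale
      · have hQP : dcube n Q ⊆ dcube n ((-(m:ℤ), κ) : DIdx n) := dcube_nest hscale hxQ hκ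
        by_contra hgt
        push_neg at hgt
        have hv0 : volume (dcube n Q) ≠ 0 := (volume_dcube_pos n Q).ne'
        have hvt : volume (dcube n Q) ≠ ∞ := volume_dcube_ne_top n Q
        have hcond : ((j:ℝ≥0∞)+1)⁻¹ * volume (dcube n Q) < Tw n (wk k) Q := by
          have h5 := ENNReal.mul_lt_mul_left hv0 hvt hgt
          rwa [mul_right_comm, ENNReal.inv_mul_cancel hv0 hvt, one_mul] at h5
        exact hk (Set.mem_iUnion.2 ⟨Q, Set.mem_iUnion.2 ⟨⟨hQP, hcond⟩, hxQ⟩⟩)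
      · exact zero_le
    have htend := tendsto_atTop_iInf (hHanti x)
    have hiInf : (⨅ k, H k x) = 0 := by
      by_contra hne0
      obtain ⟨j, hj⟩ := ENNReal.exists_inv_nat_lt hne0
      obtain ⟨k, hk⟩ := key j
      have h1 : (⨅ k', H k' x) ≤ ((j:ℝ≥0∞)+1)⁻¹ := le_trans (iInf_le _ k) hk
      have h2 : ((j:ℝ≥0∞)+1)⁻¹ ≤ ((j:ℝ≥0∞))⁻¹ := by
        gcongr
        exact le_self_add
      exact absurd (lt_of_le_of_lt (h1.trans h2) hj) (lt_irrefl _)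
    rwa [hiInf] at htend
  -- choose k
  obtain ⟨k, hintH⟩ : ∃ k, (∫⁻ x, H k x ^ pr) < δ0 := by
    have hlim : Filter.Tendsto (fun k => ∫⁻ x, H k x ^ pr) Filter.atTop (nhds 0) := by
      have h0 : (0:ℝ≥0∞) = ∫⁻ (_ : EuclideanSpace ℝ (Fin n)), 0 := by simp
      rw [h0]
      refine tendsto_lintegral_of_dominated_convergence (fun x => CY g x ^ pr)
        (fun k => ENNReal.continuous_rpow_const.measurable.comp (mH k))
        (fun k => Filter.Eventually.of_forall fun x =>
          ENNReal.rpow_le_rpow (hHle k x) hpr0.le)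
        hItot ?_
      filter_upwards [haeH] with x hx
      have := hx.ennrpow_const pr
      rwa [ENNReal.zero_rpow_of_pos hpr0] at this
    exact ((tendsto_order.1 hlim).2 δ0 hδ0pos).exists
  -- final assembly
  refine ⟨g' k, hgfin k, ?_⟩
  have hpt : ∀ x, supform n (fun Q => (volume (dcube n Q))⁻¹ * Tw n (wk k) Q) x
      ≤ H k x + B m x := by
    intro x
    refine supform_le fun Q hxQ => ?_
    by_cases hscale : -(m:ℤ) ≤ Q.1
    · refine le_add_right ?_
      have h := le_supform (c := fun Q => if -(m:ℤ) ≤ Q.1 then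
        (volume (dcube n Q))⁻¹ * Tw n (wk k) Q else 0) hxQ
      simp only [if_pos hscale] at h
      exact h
    · push_neg at hscale
      refine le_add_left ?_
      have h := le_supform (c := fun Q => if Q.1 < -(m:ℤ) then
        (volume (dcube n Q))⁻¹ * Tw n w0 Q else 0) hxQ
      simp only [if_pos hscale] at h
      exact le_trans (mul_le_mul_right (Tw_mono_w (hwk_le k) Q) _) h
  rw [hCYk, heLp]
  have hrpow_add : ∀ a b : ℝ≥0∞, (a + b) ^ pr ≤ 2 ^ pr * (a ^ pr + b ^ pr) := by
    intro a b
    have h1 : a + b ≤ 2 * max a b := by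
      rcases le_total a b with h | h
      · rw [max_eq_right h, two_mul]
        exact add_le_add_left h b
      · rw [max_eq_left h, two_mul]
        exact add_le_add_right h a
    calc (a+b)^pr ≤ (2 * max a b)^pr := ENNReal.rpow_le_rpow h1 hpr0.le
      _ = 2^pr * (max a b)^pr := ENNReal.mul_rpow_of_nonneg _ _ hpr0.le
      _ ≤ 2^pr * (a^pr + b^pr) := by
          refine mul_le_mul_right ?_ _
          rcases le_total a b with h | h
          · rw [max_eq_right h]
            exact le_add_left le_rfl
          · rw [max_eq_left h]
            exact le_add_right le_rfl
  have hint : (∫⁻ x, supform n (fun Q => (volume (dcube n Q))⁻¹ * Tw n (wk k) Q) x ^ pr)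
      < ε ^ pr := by
    have mHpr : Measurable fun x => H k x ^ pr := (mH k).pow_const pr
    have mBpr : Measurable fun x => B m x ^ pr := (mB m).pow_const pr
    have hme : Measurable fun x => H k x ^ pr + B m x ^ pr := mHpr.add mBpr
    calc (∫⁻ x, supform n (fun Q => (volume (dcube n Q))⁻¹ * Tw n (wk k) Q) x ^ pr)
        ≤ ∫⁻ x, 2^pr * (H k x ^ pr + B m x ^ pr) := lintegral_mono fun x =>
          le_trans (ENNReal.rpow_le_rpow (hpt x) hpr0.le) (hrpow_add _ _)
      _ = 2^pr * ((∫⁻ x, H k x ^ pr) + ∫⁻ x, B m x ^ pr) := by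
          rw [lintegral_const_mul _ hme, lintegral_add_left mHpr]
      _ < 2^pr * (δ0 + (δ0 + δ0)) := by
          refine ENNReal.mul_lt_mul_right h2pr0 h2prtop ?_
          exact ENNReal.add_lt_add hintH hintB
      _ ≤ 2^pr * (4 * δ0) := by
          refine mul_le_mul_right ?_ _
          rw [show (4:ℝ≥0∞) * δ0 = δ0 + (δ0 + (δ0 + δ0)) by ring]
          exact add_le_add_right (add_le_add_right le_self_add _) _
      _ = ε ^ pr := by
          rw [hδ0def, ← mul_assoc]
          exact ENNReal.mul_div_cancel' (by simp [h2pr0]) (fun h => absurd h (by finiteness))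
  calc (∫⁻ x, supform n (fun Q => (volume (dcube n Q))⁻¹ * Tw n (wk k) Q) x ^ pr) ^ pr⁻¹
      < (ε ^ pr) ^ pr⁻¹ := ENNReal.rpow_lt_rpow hint (by positivity)
    _ = ε := by
        rw [← ENNReal.rpow_mul, mul_inv_cancel₀ hpr0.ne', ENNReal.rpow_one]

end
end

section
/- Consider two functions f, g : ℝ^n → [0, ∞). Assume there are constants 0 < c_1, c_2 < ∞ such that for every z ∈ ℝ^n and λ > 0 with f(z) > λ, there exists a measurable set B ⊂ ℝ^n with g(y) > c_1 λ for all y ∈ B and 0 < (sup_{y∈B} |y − z|)^n ≤ c_2 |B|. Then there is a constant 0 < c_3 < ∞, depending only on c_1, c_2 and n, such that ‖f‖_{L_p(ℝ^n)} ≤ c_3 ‖g‖_{L_p(ℝ^n)} for every 1 ≤ p ≤ ∞. -/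
open MeasureTheory ENNReal Metric Set

noncomputable section

lemma aux_layer {α : Type*} [MeasurableSpace α] {μ : Measure α} {F h : α → ℝ}
    (hF : Measurable F) (hh : Measurable h) (hFnn : ∀ x, 0 ≤ F x) (hhnn : ∀ x, 0 ≤ h x)
    {K : ℝ≥0∞} (hK : K ≠ ∞) {pr : ℝ} (hpr : 0 < pr)
    (hdist : ∀ t : ℝ, 0 < t → μ {x | t < F x} ≤ K * μ {x | t < h x}) :
    ∫⁻ x, ENNReal.ofReal (F x ^ pr) ∂μ ≤ K * ∫⁻ x, ENNReal.ofReal (h x ^ pr) ∂μ := by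
  rw [lintegral_rpow_eq_lintegral_meas_lt_mul μ (Filter.Eventually.of_forall hFnn)
    hF.aemeasurable hpr,
    lintegral_rpow_eq_lintegral_meas_lt_mul μ (Filter.Eventually.of_forall hhnn)
    hh.aemeasurable hpr, ← mul_assoc, mul_comm K, mul_assoc]
  gcongr
  rw [← lintegral_const_mul' K _ hK]
  refine lintegral_mono_ae ?_
  filter_upwards [self_mem_ae_restrict (measurableSet_Ioi : MeasurableSet (Ioi (0:ℝ)))] with t ht
  rw [← mul_assoc]
  gcongr
  exact hdist t ht

lemma aux_key (n : ℕ) (c₁ c₂ : ℝ) (hc₂ : 0 < c₂)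
    (f g : EuclideanSpace ℝ (Fin n) → ℝ)
    (H : ∀ (z : EuclideanSpace ℝ (Fin n)) (lam : ℝ), 0 < lam → lam < f z →
          ∃ B : Set (EuclideanSpace ℝ (Fin n)), MeasurableSet B ∧
            (∀ y ∈ B, c₁ * lam < g y) ∧
            0 < (⨆ y : B, edist (y : EuclideanSpace ℝ (Fin n)) z) ^ n ∧
            (⨆ y : B, edist (y : EuclideanSpace ℝ (Fin n)) z) ^ n ≤
              ENNReal.ofReal c₂ * volume B)
    (lam : ℝ) (hlam : 0 < lam) :
    ∃ U : Set (EuclideanSpace ℝ (Fin n)), MeasurableSet U ∧ (∀ y ∈ U, c₁ * lam < g y) ∧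
      volume {z | lam < f z} ≤
        (ENNReal.ofReal c₂ * 5 ^ n * volume (ball (0 : EuclideanSpace ℝ (Fin n)) 1)) *
          volume U := by
  classical
  have hω0 : volume (ball (0 : EuclideanSpace ℝ (Fin n)) 1) ≠ 0 :=
    (measure_ball_pos volume _ one_pos).ne'
  have hK0 : (ENNReal.ofReal c₂ * 5 ^ n *
      volume (ball (0 : EuclideanSpace ℝ (Fin n)) 1)) ≠ 0 := by
    refine mul_ne_zero (mul_ne_zero ?_ ?_) hω0
    · exact (ENNReal.ofReal_pos.mpr hc₂).ne'
    · exact pow_ne_zero n (by norm_num)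
  rcases eq_empty_or_nonempty {z : EuclideanSpace ℝ (Fin n) | lam < f z} with hSe | hSne
  · exact ⟨∅, MeasurableSet.empty, by simp, by simp [hSe]⟩
  have HS : ∀ z ∈ {z : EuclideanSpace ℝ (Fin n) | lam < f z},
      ∃ B : Set (EuclideanSpace ℝ (Fin n)), MeasurableSet B ∧ (∀ y ∈ B, c₁ * lam < g y) ∧
      0 < (⨆ y : B, edist (y : EuclideanSpace ℝ (Fin n)) z) ^ n ∧
      (⨆ y : B, edist (y : EuclideanSpace ℝ (Fin n)) z) ^ n ≤ ENNReal.ofReal c₂ * volume B :=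
    fun z hz => H z lam hlam hz
  choose! B hBm hBg hBpos hBle using HS
  rcases Nat.eq_zero_or_pos n with hn | hn
  · -- n = 0 : the space is a single point
    subst hn
    obtain ⟨z, hz⟩ := hSne
    refine ⟨B z, hBm z hz, hBg z hz, ?_⟩
    have h1 : (1 : ℝ≥0∞) ≤ ENNReal.ofReal c₂ * volume (B z) := by
      simpa using hBle z hz
    have hball : (ball (0 : EuclideanSpace ℝ (Fin 0)) 1) = univ := by
      ext x
      simp only [mem_ball, mem_univ, iff_true]
      have : x = (0 : EuclideanSpace ℝ (Fin 0)) := Subsingleton.elim x 0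
      simp [this]
    calc volume {z : EuclideanSpace ℝ (Fin 0) | lam < f z}
        ≤ volume (ball (0 : EuclideanSpace ℝ (Fin 0)) 1) := by
          rw [hball]; exact measure_mono (subset_univ _)
      _ = volume (ball (0 : EuclideanSpace ℝ (Fin 0)) 1) * 1 := (mul_one _).symm
      _ ≤ volume (ball (0 : EuclideanSpace ℝ (Fin 0)) 1) *
            (ENNReal.ofReal c₂ * volume (B z)) := by gcongr
      _ = ENNReal.ofReal c₂ * 5 ^ 0 * volume (ball (0 : EuclideanSpace ℝ (Fin 0)) 1) *
            volume (B z) := by ring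
  · -- n ≥ 1
    have hrpos : ∀ z ∈ {z : EuclideanSpace ℝ (Fin n) | lam < f z},
        0 < ⨆ y : B z, edist (y : EuclideanSpace ℝ (Fin n)) z := by
      intro z hz
      rcases eq_or_lt_of_le (zero_le : (0:ℝ≥0∞) ≤ (⨆ y : B z, edist (y : EuclideanSpace ℝ (Fin n)) z))
        with h0 | h
      · exfalso
        have := hBpos z hz
        rw [← h0, zero_pow hn.ne'] at this
        exact lt_irrefl _ this
      · exact h
    rcases eq_top_or_lt_top
        (⨆ z : {z : EuclideanSpace ℝ (Fin n) | lam < f z}, volume (B z)) with hM | hM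
    · -- unbounded measures: a union of the B's has infinite measure
      have hex : ∀ k : ℕ, ∃ z : {z : EuclideanSpace ℝ (Fin n) | lam < f z},
          (k : ℝ≥0∞) < volume (B z) := by
        intro k
        have : (k : ℝ≥0∞) < ⨆ z : {z : EuclideanSpace ℝ (Fin n) | lam < f z}, volume (B z) :=
          hM ▸ ENNReal.natCast_lt_top k
        exact lt_iSup_iff.mp this
      choose zk hzk using hex
      refine ⟨⋃ k : ℕ, B (zk k), MeasurableSet.iUnion fun k => hBm _ (zk k).2, ?_, ?_⟩
      · intro y hy
        rcases mem_iUnion.mp hy with ⟨k, hk⟩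
        exact hBg _ (zk k).2 y hk
      · have hU : volume (⋃ k : ℕ, B ((zk k : EuclideanSpace ℝ (Fin n)))) = ∞ := by
          rw [eq_top_iff, ← ENNReal.iSup_natCast]
          refine iSup_le fun k => ?_
          exact le_trans (hzk k).le
            (measure_mono (subset_iUnion (fun k => B ((zk k : EuclideanSpace ℝ (Fin n)))) k))
        rw [hU, ENNReal.mul_top hK0]
        exact le_top
    ·
      have hMne : (⨆ z : {z : EuclideanSpace ℝ (Fin n) | lam < f z}, volume (B z)) ≠ ⊤ := hM.ne
      set Cb : ℝ≥0∞ := ENNReal.ofReal c₂ *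
        (⨆ z : {z : EuclideanSpace ℝ (Fin n) | lam < f z}, volume (B z)) with hCb
      have hCbne : Cb ≠ ⊤ := ENNReal.mul_ne_top ENNReal.ofReal_ne_top hMne
      have hBleC : ∀ z ∈ {z : EuclideanSpace ℝ (Fin n) | lam < f z},
          (⨆ y : B z, edist (y : EuclideanSpace ℝ (Fin n)) z) ^ n ≤ Cb := by
        intro z hz
        refine (hBle z hz).trans ?_
        rw [hCb]
        gcongr
        exact le_iSup (fun z : {z : EuclideanSpace ℝ (Fin n) | lam < f z} => volume (B z)) ⟨z, hz⟩
      have hrne : ∀ z ∈ {z : EuclideanSpace ℝ (Fin n) | lam < f z},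
          (⨆ y : B z, edist (y : EuclideanSpace ℝ (Fin n)) z) ≠ ⊤ := by
        intro z hz htop
        have := hBleC z hz
        rw [htop, ENNReal.top_pow hn.ne'] at this
        exact hCbne (top_le_iff.mp this)
      set ρ : EuclideanSpace ℝ (Fin n) → ℝ :=
        fun z => (⨆ y : B z, edist (y : EuclideanSpace ℝ (Fin n)) z).toReal with hρ
      have hρnn : ∀ z, 0 ≤ ρ z := fun z => ENNReal.toReal_nonneg
      have hρpos : ∀ z ∈ {z : EuclideanSpace ℝ (Fin n) | lam < f z}, 0 < ρ z := by
        intro z hz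
        exact ENNReal.toReal_pos (hrpos z hz).ne' (hrne z hz)
      set R : ℝ := Cb.toReal ^ ((n : ℝ)⁻¹) with hR
      have hRn : R ^ n = Cb.toReal := by
        rw [hR, ← Real.rpow_natCast (Cb.toReal ^ ((n:ℝ)⁻¹)) n, ← Real.rpow_mul ENNReal.toReal_nonneg,
          inv_mul_cancel₀ (by exact_mod_cast hn.ne'), Real.rpow_one]
      have hρR : ∀ z ∈ {z : EuclideanSpace ℝ (Fin n) | lam < f z}, ρ z ≤ R := by
        intro z hz
        have h1 : ρ z ^ n ≤ Cb.toReal := by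
          rw [hρ, ← ENNReal.toReal_pow]
          exact ENNReal.toReal_mono hCbne (hBleC z hz)
        have hRnn : 0 ≤ R := Real.rpow_nonneg ENNReal.toReal_nonneg _
        exact le_of_pow_le_pow_left₀ hn.ne' hRnn (by rwa [hRn])
      have hBsub : ∀ z ∈ {z : EuclideanSpace ℝ (Fin n) | lam < f z}, B z ⊆ closedBall z (ρ z) := by
        intro z hz y hy
        have h1 : edist y z ≤ ⨆ y : B z, edist (y : EuclideanSpace ℝ (Fin n)) z :=
          le_iSup (fun y : B z => edist (y : EuclideanSpace ℝ (Fin n)) z) ⟨y, hy⟩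
        rw [mem_closedBall, dist_edist]
        exact ENNReal.toReal_mono (hrne z hz) h1
      obtain ⟨u, hut, hud, hucov⟩ :=
        Vitali.exists_disjoint_subfamily_covering_enlargement_closedBall
          {z : EuclideanSpace ℝ (Fin n) | lam < f z} id ρ R hρR 5 (by norm_num)
      have hScov : {z : EuclideanSpace ℝ (Fin n) | lam < f z} ⊆
          ⋃ b ∈ u, closedBall b (5 * ρ b) := by
        intro a ha
        obtain ⟨b, hb, hsub⟩ := hucov a ha
        exact mem_biUnion hb (hsub (mem_closedBall_self (hρpos a ha).le))
      -- countability of u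
      have hdisj : Pairwise (Function.onFun Disjoint fun b : u => closedBall (b : EuclideanSpace ℝ (Fin n)) (ρ b)) := by
        intro i j hij
        exact hud i.2 j.2 (Subtype.coe_injective.ne hij)
      have hcnt0 := MeasureTheory.Measure.countable_meas_pos_of_disjoint_iUnion (μ := volume)
        (As := fun b : u => closedBall (b : EuclideanSpace ℝ (Fin n)) (ρ b))
        (fun b => measurableSet_closedBall) hdisj
      have hall : {i : u | 0 < volume (closedBall (i : EuclideanSpace ℝ (Fin n)) (ρ i))} = univ := by
        refine eq_univ_of_forall fun i => ?_
        exact measure_closedBall_pos volume _ (hρpos i (hut i.2))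
      have hu_cnt : u.Countable := by
        rw [hall] at hcnt0
        have : Countable u := Set.countable_univ_iff.mp hcnt0
        exact Set.countable_coe_iff.mp this
      have hBdisj : u.PairwiseDisjoint B := by
        intro i hi j hj hij
        exact (hud hi hj hij).mono (hBsub i (hut hi)) (hBsub j (hut hj))
      refine ⟨⋃ b ∈ u, B b, MeasurableSet.biUnion hu_cnt (fun b hb => hBm b (hut hb)), ?_, ?_⟩
      · intro y hy
        rcases mem_iUnion₂.mp hy with ⟨b, hb, hyb⟩
        exact hBg b (hut hb) y hyb
      · have hstep : ∀ b ∈ u, volume (closedBall b (5 * ρ b)) ≤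
            (ENNReal.ofReal c₂ * 5 ^ n * volume (ball (0 : EuclideanSpace ℝ (Fin n)) 1)) *
              volume (B b) := by
          intro b hb
          have h5 : (0:ℝ) ≤ 5 * ρ b := by positivity
          rw [Measure.addHaar_closedBall volume b h5]
          have hfr : Module.finrank ℝ (EuclideanSpace ℝ (Fin n)) = n := finrank_euclideanSpace_fin
          rw [hfr, mul_pow, ENNReal.ofReal_mul (by positivity), ENNReal.ofReal_pow (hρnn b),
            ENNReal.ofReal_pow (by norm_num : (0:ℝ) ≤ 5)]
          have hρb : (ENNReal.ofReal (ρ b)) ^ n ≤ ENNReal.ofReal c₂ * volume (B b) := by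
            rw [hρ, ENNReal.ofReal_toReal (hrne b (hut hb))]
            exact hBle b (hut hb)
          calc ENNReal.ofReal 5 ^ n * ENNReal.ofReal (ρ b) ^ n *
                volume (ball (0 : EuclideanSpace ℝ (Fin n)) 1)
              ≤ ENNReal.ofReal 5 ^ n * (ENNReal.ofReal c₂ * volume (B b)) *
                volume (ball (0 : EuclideanSpace ℝ (Fin n)) 1) := by gcongr
            _ = (ENNReal.ofReal c₂ * (ENNReal.ofReal 5) ^ n *
                  volume (ball (0 : EuclideanSpace ℝ (Fin n)) 1)) * volume (B b) := by ring
            _ = (ENNReal.ofReal c₂ * 5 ^ n *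
                  volume (ball (0 : EuclideanSpace ℝ (Fin n)) 1)) * volume (B b) := by
                norm_num
        calc volume {z : EuclideanSpace ℝ (Fin n) | lam < f z}
            ≤ volume (⋃ b ∈ u, closedBall b (5 * ρ b)) := measure_mono hScov
          _ ≤ ∑' b : u, volume (closedBall (b : EuclideanSpace ℝ (Fin n)) (5 * ρ b)) :=
              measure_biUnion_le volume hu_cnt _
          _ ≤ ∑' b : u, (ENNReal.ofReal c₂ * 5 ^ n *
                volume (ball (0 : EuclideanSpace ℝ (Fin n)) 1)) * volume (B b) :=
              ENNReal.tsum_le_tsum fun b => hstep b b.2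
          _ = (ENNReal.ofReal c₂ * 5 ^ n * volume (ball (0 : EuclideanSpace ℝ (Fin n)) 1)) *
                ∑' b : u, volume (B (b : EuclideanSpace ℝ (Fin n))) := ENNReal.tsum_mul_left
          _ = (ENNReal.ofReal c₂ * 5 ^ n * volume (ball (0 : EuclideanSpace ℝ (Fin n)) 1)) *
                volume (⋃ b ∈ u, B b) := by
              rw [measure_biUnion hu_cnt hBdisj (fun b hb => hBm b (hut hb))]

lemma aux_main {α : Type*} [MeasurableSpace α] {μ : Measure α} (f g : α → ℝ) {c₁ : ℝ}
    (hc₁ : 0 < c₁) (hf : ∀ x, 0 ≤ f x) (hg : ∀ x, 0 ≤ g x) {K : ℝ≥0∞} (hKtop : K ≠ ∞)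
    (key : ∀ lam : ℝ, 0 < lam → ∃ U : Set α, MeasurableSet U ∧ (∀ y ∈ U, c₁ * lam < g y) ∧
      μ {z | lam < f z} ≤ K * μ U) :
    ∀ p : ℝ≥0∞, 1 ≤ p →
      eLpNorm f p μ ≤ max K 1 * ENNReal.ofReal c₁⁻¹ * eLpNorm g p μ := by
  classical
  choose U hUm hUg hUv using key
  set Uq : ℚ → Set α := fun q => if hq : 0 < ((q:ℝ)) then U q hq else ∅ with hUq
  have hUqm : ∀ q, MeasurableSet (Uq q) := by
    intro q; rw [hUq]; dsimp only; split
    · exact hUm _ _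
    · exact MeasurableSet.empty
  have hUqg : ∀ q : ℚ, ∀ y ∈ Uq q, c₁ * (q:ℝ) < g y := by
    intro q y hy; rw [hUq] at hy; dsimp only at hy
    split at hy
    · exact hUg _ _ y hy
    · exact absurd hy (notMem_empty y)
  have hUqv : ∀ q : ℚ, 0 < (q:ℝ) → μ {z | (q:ℝ) < f z} ≤ K * μ (Uq q) := by
    intro q hq
    have : Uq q = U q hq := by rw [hUq]; dsimp only; rw [dif_pos hq]
    rw [this]; exact hUv _ hq
  set h : α → ℝ≥0∞ :=
    fun x => ⨆ q : ℚ, (Uq q).indicator (fun _ => ENNReal.ofReal (c₁ * q)) x with hh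
  have hhm : Measurable h := Measurable.iSup fun q => measurable_const.indicator (hUqm q)
  have hhle : ∀ x, h x ≤ ENNReal.ofReal (g x) := by
    intro x; rw [hh]; dsimp only
    refine iSup_le fun q => ?_
    by_cases hx : x ∈ Uq q
    · rw [indicator_of_mem hx]
      exact ENNReal.ofReal_le_ofReal (hUqg q x hx).le
    · rw [indicator_of_notMem hx]; exact zero_le
  have hhne : ∀ x, h x ≠ ∞ := fun x => ((hhle x).trans_lt ENNReal.ofReal_lt_top).ne
  have hUqh : ∀ q : ℚ, ∀ x ∈ Uq q, ENNReal.ofReal (c₁ * q) ≤ h x := by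
    intro q x hx
    rw [hh]; dsimp only
    refine le_trans ?_ (le_iSup _ q)
    rw [indicator_of_mem hx]
  set T : ℚ → Set α := fun q =>
    ⋂ (q' : ℚ) (_ : 0 < (q':ℝ)) (_ : q' ≤ q), toMeasurable μ {z | (q':ℝ) < f z} with hT
  have hTm : ∀ q, MeasurableSet (T q) :=
    fun q => MeasurableSet.iInter fun q' => MeasurableSet.iInter fun _ =>
      MeasurableSet.iInter fun _ => measurableSet_toMeasurable μ _
  have hST : ∀ q : ℚ, 0 < (q:ℝ) → {z | (q:ℝ) < f z} ⊆ T q := by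
    intro q hq x hx
    rw [hT]
    refine mem_iInter.mpr fun q' => mem_iInter.mpr fun hq' => mem_iInter.mpr fun hle => ?_
    refine subset_toMeasurable μ _ ?_
    have hle' : (q':ℝ) ≤ (q:ℝ) := by exact_mod_cast hle
    exact lt_of_le_of_lt hle' hx
  have hTanti : ∀ a b : ℚ, a ≤ b → T b ⊆ T a := by
    intro a b hab x hx
    rw [hT] at hx ⊢
    refine mem_iInter.mpr fun q' => mem_iInter.mpr fun h1 => mem_iInter.mpr fun h2 => ?_
    exact mem_iInter.mp (mem_iInter.mp (mem_iInter.mp hx q') h1) (h2.trans hab)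
  have hTv : ∀ q : ℚ, 0 < (q:ℝ) → μ (T q) ≤ K * μ (Uq q) := by
    intro q hq
    have h1 : T q ⊆ toMeasurable μ {z | (q:ℝ) < f z} := by
      intro x hx
      rw [hT] at hx
      exact mem_iInter.mp (mem_iInter.mp (mem_iInter.mp hx q) hq) le_rfl
    calc μ (T q) ≤ μ (toMeasurable μ {z | (q:ℝ) < f z}) := measure_mono h1
      _ = μ {z | (q:ℝ) < f z} := measure_toMeasurable _
      _ ≤ K * μ (Uq q) := hUqv q hq
  set F : α → ℝ≥0∞ := fun x =>
    ⨆ q : ℚ, if 0 < (q:ℝ) then (T q).indicator (fun _ => ENNReal.ofReal q) x else 0 with hF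
  have hFm : Measurable F := by
    refine Measurable.iSup fun q => ?_
    split
    · exact measurable_const.indicator (hTm q)
    · exact measurable_const
  have hfF : ∀ x, ENNReal.ofReal (f x) ≤ F x := by
    intro x
    rcases le_or_gt (f x) 0 with hfx | hfx
    · rw [ENNReal.ofReal_eq_zero.mpr hfx]; exact zero_le
    refine ENNReal.le_of_forall_pos_le_add fun ε hε _ => ?_
    have hmax : max (f x - (ε:ℝ)) (f x / 2) < f x := by
      rcases max_cases (f x - (ε:ℝ)) (f x / 2) with ⟨hm, _⟩ | ⟨hm, _⟩ <;> rw [hm]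
      · have : (0:ℝ) < ε := by exact_mod_cast hε
        linarith
      · linarith
    obtain ⟨q, hq1, hq2⟩ := exists_rat_btwn hmax
    have hq0 : 0 < (q:ℝ) := lt_of_le_of_lt (by positivity : (0:ℝ) ≤ f x / 2)
      (lt_of_le_of_lt (le_max_right _ _) hq1)
    have hxT : x ∈ T q := hST q hq0 hq2
    have hqF : ENNReal.ofReal q ≤ F x := by
      rw [hF]; dsimp only
      refine le_trans ?_ (le_iSup _ q)
      rw [if_pos hq0, indicator_of_mem hxT]
    have hfq : f x ≤ (q:ℝ) + (ε:ℝ) := by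
      have := lt_of_le_of_lt (le_max_left _ _) hq1
      linarith
    calc ENNReal.ofReal (f x) ≤ ENNReal.ofReal ((q:ℝ) + (ε:ℝ)) := ENNReal.ofReal_le_ofReal hfq
      _ = ENNReal.ofReal q + ENNReal.ofReal ε := ENNReal.ofReal_add hq0.le (by positivity)
      _ = ENNReal.ofReal q + ε := by rw [ENNReal.ofReal_coe_nnreal]
      _ ≤ F x + ε := by gcongr
  have hFdist : ∀ t : ℝ, 0 < t →
      μ {x | ENNReal.ofReal t < F x} ≤ K * μ {x | ENNReal.ofReal (c₁ * t) < h x} := by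
    intro t ht
    have hsub : {x | ENNReal.ofReal t < F x} ⊆ ⋃ q : {q : ℚ // t < (q:ℝ)}, T (q:ℚ) := by
      intro x hx
      rw [mem_setOf_eq, hF] at hx
      dsimp only at hx
      obtain ⟨q, hq⟩ := lt_iSup_iff.mp hx
      by_cases hq0 : 0 < (q:ℝ)
      · rw [if_pos hq0] at hq
        by_cases hxT : x ∈ T q
        · rw [indicator_of_mem hxT] at hq
          have hqt : t < (q:ℝ) := (ENNReal.ofReal_lt_ofReal_iff_of_nonneg ht.le).mp hq
          exact mem_iUnion.mpr ⟨⟨q, hqt⟩, hxT⟩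
        · rw [indicator_of_notMem hxT] at hq
          exact absurd hq (by simp)
      · rw [if_neg hq0] at hq
        exact absurd hq (by simp)
    have hdir : Directed (· ⊆ ·) (fun q : {q : ℚ // t < (q:ℝ)} => T (q:ℚ)) := by
      intro q₁ q₂
      refine ⟨⟨min (q₁:ℚ) (q₂:ℚ), ?_⟩, ?_, ?_⟩
      · have : t < ((min (q₁:ℚ) (q₂:ℚ) : ℚ) : ℝ) := by
          rcases min_cases (q₁:ℚ) (q₂:ℚ) with ⟨hm, _⟩ | ⟨hm, _⟩ <;> rw [hm]
          · exact q₁.2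
          · exact q₂.2
        exact this
      · exact hTanti _ _ (min_le_left _ _)
      · exact hTanti _ _ (min_le_right _ _)
    calc μ {x | ENNReal.ofReal t < F x}
        ≤ μ (⋃ q : {q : ℚ // t < (q:ℝ)}, T (q:ℚ)) := measure_mono hsub
      _ = ⨆ q : {q : ℚ // t < (q:ℝ)}, μ (T (q:ℚ)) := hdir.measure_iUnion
      _ ≤ K * μ {x | ENNReal.ofReal (c₁ * t) < h x} := by
          refine iSup_le fun q => ?_
          have hq0 : 0 < ((q:ℚ):ℝ) := ht.trans q.2
          refine (hTv q hq0).trans ?_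
          refine mul_le_mul_right (measure_mono ?_) K
          intro x hx
          have h1 : ENNReal.ofReal (c₁ * (q:ℚ)) ≤ h x := hUqh _ x hx
          have h2 : ENNReal.ofReal (c₁ * t) < ENNReal.ofReal (c₁ * ((q:ℚ):ℝ)) := by
            rw [ENNReal.ofReal_lt_ofReal_iff (by positivity)]
            exact (mul_lt_mul_iff_right₀ hc₁).mpr q.2
          exact lt_of_lt_of_le h2 (by exact_mod_cast h1)
  intro p hp
  by_cases hptop : p = ∞
  · subst hptop
    rw [eLpNorm_exponent_top, eLpNorm_exponent_top]
    have hne0 : max K 1 * ENNReal.ofReal c₁⁻¹ ≠ 0 := by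
      refine mul_ne_zero ?_ ?_
      · exact (lt_of_lt_of_le zero_lt_one (le_max_right K 1)).ne'
      · exact (ENNReal.ofReal_pos.mpr (by positivity)).ne'
    by_cases hgtop : eLpNormEssSup g μ = ∞
    · rw [hgtop, ENNReal.mul_top hne0]
      exact le_top
    set M := eLpNormEssSup g μ with hM
    have hMle : ∀ ε : ℝ, 0 < ε → eLpNormEssSup f μ ≤ ENNReal.ofReal (M.toReal / c₁ + ε) := by
      intro ε hε
      set t : ℝ := M.toReal / c₁ + ε with htdef
      have ht : 0 < t := by
        have : (0:ℝ) ≤ M.toReal / c₁ := by positivity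
        rw [htdef]; linarith
      have hMt : M < ENNReal.ofReal (c₁ * t) := by
        have hct : c₁ * t = M.toReal + c₁ * ε := by
          rw [htdef]; field_simp
        rw [hct]
        calc M = ENNReal.ofReal M.toReal := (ENNReal.ofReal_toReal hgtop).symm
          _ < ENNReal.ofReal (M.toReal + c₁ * ε) := by
              rw [ENNReal.ofReal_lt_ofReal_iff (by positivity)]
              nlinarith [ENNReal.toReal_nonneg (a := M)]
      have hU0 : μ (U t ht) = 0 := by
        have hae : ∀ᵐ x ∂μ, (‖g x‖₊ : ℝ≥0∞) ≤ M := ae_le_eLpNormEssSup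
        have hnull : μ {x | M < (‖g x‖₊ : ℝ≥0∞)} = 0 := by
          rw [ae_iff] at hae
          simpa [not_le] using hae
        refine measure_mono_null ?_ hnull
        intro y hy
        have h1 : c₁ * t < g y := hUg t ht y hy
        have h2 : M < ENNReal.ofReal (g y) := lt_trans hMt (by
          rw [ENNReal.ofReal_lt_ofReal_iff (lt_trans (by positivity) h1)]
          exact h1)
        rwa [mem_setOf_eq, ← enorm_eq_nnnorm, Real.enorm_eq_ofReal (hg y)]
      have hf0 : μ {z | t < f z} = 0 := by
        have := hUv t ht
        rw [hU0, mul_zero] at this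
        exact le_antisymm this zero_le
      refine essSup_le_of_ae_le _ ?_
      have : ∀ᵐ x ∂μ, ¬ (t < f x) := by
        rw [ae_iff]; simpa using hf0
      filter_upwards [this] with x hx
      rw [Real.enorm_eq_ofReal (hf x)]
      exact ENNReal.ofReal_le_ofReal (not_lt.mp hx)
    have hfM : eLpNormEssSup f μ ≤ ENNReal.ofReal (M.toReal / c₁) := by
      refine ENNReal.le_of_forall_pos_le_add fun ε hε _ => ?_
      refine (hMle ε (by exact_mod_cast hε)).trans ?_
      rw [ENNReal.ofReal_add (by positivity) (by exact_mod_cast hε.le)]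
      gcongr
      rw [ENNReal.ofReal_coe_nnreal]
    refine hfM.trans ?_
    have h1 : ENNReal.ofReal (M.toReal / c₁) = M * ENNReal.ofReal c₁⁻¹ := by
      rw [div_eq_mul_inv, ENNReal.ofReal_mul ENNReal.toReal_nonneg,
        ENNReal.ofReal_toReal hgtop]
    rw [h1]
    calc M * ENNReal.ofReal c₁⁻¹ = 1 * ENNReal.ofReal c₁⁻¹ * M := by ring
      _ ≤ max K 1 * ENNReal.ofReal c₁⁻¹ * M := by gcongr; exact le_max_right K 1
  ·
    have hp0 : p ≠ 0 := (lt_of_lt_of_le zero_lt_one hp).ne'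
    set pr := p.toReal with hprdef
    have hpr1 : 1 ≤ pr := by
      rw [hprdef, ← ENNReal.toReal_one]
      exact ENNReal.toReal_mono hptop hp
    have hpr0 : 0 < pr := lt_of_lt_of_le zero_lt_one hpr1
    have hne0 : max K 1 * ENNReal.ofReal c₁⁻¹ ≠ 0 := by
      refine mul_ne_zero ?_ ?_
      · exact (lt_of_lt_of_le zero_lt_one (le_max_right K 1)).ne'
      · exact (ENNReal.ofReal_pos.mpr (by positivity)).ne'
    have hfrw : eLpNorm f p μ = (∫⁻ x, (ENNReal.ofReal (f x)) ^ pr ∂μ) ^ (1/pr) := by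
      rw [eLpNorm_eq_lintegral_rpow_enorm_toReal hp0 hptop]
      congr 1
      exact lintegral_congr fun x => by rw [Real.enorm_eq_ofReal (hf x)]
    have hgrw : eLpNorm g p μ = (∫⁻ x, (ENNReal.ofReal (g x)) ^ pr ∂μ) ^ (1/pr) := by
      rw [eLpNorm_eq_lintegral_rpow_enorm_toReal hp0 hptop]
      congr 1
      exact lintegral_congr fun x => by rw [Real.enorm_eq_ofReal (hg x)]
    set Ig := ∫⁻ x, (ENNReal.ofReal (g x)) ^ pr ∂μ with hIgdef
    by_cases hIgtop : Ig = ∞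
    · rw [hgrw, hIgtop, ENNReal.top_rpow_of_pos (by positivity), ENNReal.mul_top hne0]
      exact le_top
    -- real-valued minorant of g
    set ht : α → ℝ := fun x => (h x).toReal with htdef
    have hhtm : Measurable ht := hhm.ennreal_toReal
    have hhtnn : ∀ x, 0 ≤ ht x := fun x => ENNReal.toReal_nonneg
    have hhtg : ∀ x, ht x ≤ g x := by
      intro x
      rw [htdef]
      calc (h x).toReal ≤ (ENNReal.ofReal (g x)).toReal :=
          ENNReal.toReal_mono ENNReal.ofReal_ne_top (hhle x)
        _ = g x := ENNReal.toReal_ofReal (hg x)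
    -- integral of h-part is controlled
    have hIh : ∫⁻ x, ENNReal.ofReal ((c₁⁻¹ * ht x) ^ pr) ∂μ ≤ (ENNReal.ofReal c₁⁻¹) ^ pr * Ig := by
      have hstep : ∀ x, ENNReal.ofReal ((c₁⁻¹ * ht x) ^ pr) ≤
          (ENNReal.ofReal c₁⁻¹) ^ pr * (ENNReal.ofReal (g x)) ^ pr := by
        intro x
        have h1 : (c₁⁻¹ * ht x) ^ pr ≤ (c₁⁻¹ * g x) ^ pr := by
          apply Real.rpow_le_rpow (by positivity) ?_ hpr0.le
          have := hhtg x
          nlinarith [inv_pos.mpr hc₁]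
        refine (ENNReal.ofReal_le_ofReal h1).trans ?_
        have h2 : (c₁⁻¹ * g x) ^ pr = c₁⁻¹ ^ pr * g x ^ pr :=
          Real.mul_rpow (by positivity) (hg x)
        rw [h2, ENNReal.ofReal_mul (by positivity),
          ENNReal.ofReal_rpow_of_nonneg (by positivity) hpr0.le,
          ENNReal.ofReal_rpow_of_nonneg (hg x) hpr0.le]
      calc ∫⁻ x, ENNReal.ofReal ((c₁⁻¹ * ht x) ^ pr) ∂μ
          ≤ ∫⁻ x, (ENNReal.ofReal c₁⁻¹) ^ pr * (ENNReal.ofReal (g x)) ^ pr ∂μ :=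
            lintegral_mono hstep
        _ = (ENNReal.ofReal c₁⁻¹) ^ pr * Ig := by
            rw [lintegral_const_mul' _ _ (ENNReal.rpow_ne_top_of_nonneg hpr0.le
              ENNReal.ofReal_ne_top)]
    -- {F = ∞} is null
    have hFfin : ∀ᵐ x ∂μ, F x ≠ ∞ := by
      have hIh' : ∫⁻ x, (h x) ^ pr ∂μ ≤ Ig :=
        lintegral_mono fun x => ENNReal.rpow_le_rpow (hhle x) hpr0.le
      set mI := μ {x | F x = ∞} with hmI
      have hch : ∀ t : ℝ, 0 < t → mI * (ENNReal.ofReal (c₁ * t)) ^ pr ≤ K * Ig := by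
        intro t htp
        have hsub : {x | F x = ∞} ⊆ {x | ENNReal.ofReal t < F x} := by
          intro x hx
          rw [mem_setOf_eq] at hx ⊢
          rw [hx]
          exact ENNReal.ofReal_lt_top
        have h1 : mI ≤ K * μ {x | ENNReal.ofReal (c₁ * t) < h x} :=
          (measure_mono hsub).trans (hFdist t htp)
        have hcheb : μ {x | ENNReal.ofReal (c₁ * t) < h x} * (ENNReal.ofReal (c₁ * t)) ^ pr ≤ Ig := by
          have h2 : {x | ENNReal.ofReal (c₁ * t) < h x} ⊆
              {x | (ENNReal.ofReal (c₁ * t)) ^ pr ≤ (h x) ^ pr} := by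
            intro x hx
            exact ENNReal.rpow_le_rpow (le_of_lt hx) hpr0.le
          calc μ {x | ENNReal.ofReal (c₁ * t) < h x} * (ENNReal.ofReal (c₁ * t)) ^ pr
              ≤ μ {x | (ENNReal.ofReal (c₁ * t)) ^ pr ≤ (h x) ^ pr} *
                (ENNReal.ofReal (c₁ * t)) ^ pr := mul_le_mul_left (measure_mono h2) _
            _ = (ENNReal.ofReal (c₁ * t)) ^ pr * μ {x | (ENNReal.ofReal (c₁ * t)) ^ pr ≤ (h x) ^ pr} :=
                mul_comm _ _
            _ ≤ ∫⁻ x, (h x) ^ pr ∂μ :=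
                mul_meas_ge_le_lintegral₀ ((hhm.pow_const pr).aemeasurable) _
            _ ≤ Ig := hIh'
        calc mI * (ENNReal.ofReal (c₁ * t)) ^ pr
            ≤ (K * μ {x | ENNReal.ofReal (c₁ * t) < h x}) * (ENNReal.ofReal (c₁ * t)) ^ pr := by
              gcongr
          _ = K * (μ {x | ENNReal.ofReal (c₁ * t) < h x} * (ENNReal.ofReal (c₁ * t)) ^ pr) :=
              mul_assoc _ _ _
          _ ≤ K * Ig := by gcongr
      have hμ0 : mI = 0 := by
        by_contra hne
        have hμfin : mI ≠ ∞ := by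
          have := hch 1 one_pos
          intro htop
          rw [htop] at this
          have hpow : (ENNReal.ofReal (c₁ * 1)) ^ pr ≠ 0 := by
            refine (ENNReal.rpow_pos ?_ ENNReal.ofReal_ne_top).ne'
            exact ENNReal.ofReal_pos.mpr (by linarith)
          rw [ENNReal.top_mul hpow] at this
          exact (lt_of_le_of_lt this (ENNReal.mul_lt_top hKtop.lt_top (Ne.lt_top hIgtop))).false
        -- choose t large
        set q : ℝ≥0∞ := K * Ig / mI with hqdef
        have hqfin : q ≠ ∞ := by
          rw [hqdef]
          exact (ENNReal.div_lt_top (ENNReal.mul_ne_top hKtop hIgtop) hne).ne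
        obtain ⟨m, hm⟩ := exists_nat_ge ((max 1 (q.toReal + 1)) / c₁)
        set t : ℝ := (m : ℝ) + 1 with htdef2
        have htpos : 0 < t := by positivity
        have hct : max 1 (q.toReal + 1) ≤ c₁ * t := by
          rw [div_le_iff₀ hc₁] at hm
          have : (m:ℝ) * c₁ ≤ t * c₁ := by
            have : (m:ℝ) ≤ t := by rw [htdef2]; linarith
            nlinarith
          nlinarith
        have hs1 : (1:ℝ≥0∞) ≤ ENNReal.ofReal (c₁ * t) := by
          rw [← ENNReal.ofReal_one]
          exact ENNReal.ofReal_le_ofReal ((le_max_left _ _).trans hct)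
        have hsq : q < ENNReal.ofReal (c₁ * t) := by
          calc q = ENNReal.ofReal q.toReal := (ENNReal.ofReal_toReal hqfin).symm
            _ < ENNReal.ofReal (q.toReal + 1) := by
                rw [ENNReal.ofReal_lt_ofReal_iff (by positivity)]; linarith
            _ ≤ ENNReal.ofReal (c₁ * t) :=
                ENNReal.ofReal_le_ofReal ((le_max_right _ _).trans hct)
        have hspow : ENNReal.ofReal (c₁ * t) ≤ (ENNReal.ofReal (c₁ * t)) ^ pr := by
          conv_lhs => rw [← ENNReal.rpow_one (ENNReal.ofReal (c₁ * t))]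
          exact ENNReal.rpow_le_rpow_of_exponent_le hs1 hpr1
        have hcontra : K * Ig < mI * (ENNReal.ofReal (c₁ * t)) ^ pr := by
          calc K * Ig = mI * q := by
                rw [hqdef, ENNReal.mul_div_cancel hne hμfin]
            _ < mI * ENNReal.ofReal (c₁ * t) := by
                exact ENNReal.mul_lt_mul_right hne hμfin hsq
            _ ≤ mI * (ENNReal.ofReal (c₁ * t)) ^ pr := by gcongr
        exact (lt_of_lt_of_le hcontra (hch t htpos)).false
      rw [ae_iff]
      simpa [not_not] using hμ0
    -- the chain of inequalities
    set Ft : α → ℝ := fun x => (F x).toReal with hFtdef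
    have hFtm : Measurable Ft := hFm.ennreal_toReal
    have hdist' : ∀ t : ℝ, 0 < t → μ {x | t < Ft x} ≤ K * μ {x | t < c₁⁻¹ * ht x} := by
      intro t htp
      have hsub1 : {x | t < Ft x} ⊆ {x | ENNReal.ofReal t < F x} := by
        intro x hx
        rw [mem_setOf_eq] at hx ⊢
        rcases eq_or_ne (F x) ∞ with hFx | hFx
        · rw [hFx]; exact ENNReal.ofReal_lt_top
        · exact (ENNReal.ofReal_lt_iff_lt_toReal htp.le hFx).mpr hx
      have hsub2 : {x | ENNReal.ofReal (c₁ * t) < h x} ⊆ {x | t < c₁⁻¹ * ht x} := by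
        intro x hx
        rw [mem_setOf_eq] at hx ⊢
        have h1 : c₁ * t < ht x := by
          rw [htdef]
          exact (ENNReal.ofReal_lt_iff_lt_toReal (by positivity) (hhne x)).mp hx
        calc t = c₁⁻¹ * (c₁ * t) := by field_simp
          _ < c₁⁻¹ * ht x := by
              have := inv_pos.mpr hc₁
              nlinarith
      calc μ {x | t < Ft x} ≤ μ {x | ENNReal.ofReal t < F x} := measure_mono hsub1
        _ ≤ K * μ {x | ENNReal.ofReal (c₁ * t) < h x} := hFdist t htp
        _ ≤ K * μ {x | t < c₁⁻¹ * ht x} := mul_le_mul_right (measure_mono hsub2) K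
    have hlay := aux_layer hFtm (hhtm.const_mul c₁⁻¹) (fun x => ENNReal.toReal_nonneg)
      (fun x => by positivity) hKtop hpr0 hdist'
    have hchain : ∫⁻ x, (ENNReal.ofReal (f x)) ^ pr ∂μ ≤ K * ((ENNReal.ofReal c₁⁻¹) ^ pr * Ig) := by
      calc ∫⁻ x, (ENNReal.ofReal (f x)) ^ pr ∂μ
          ≤ ∫⁻ x, ENNReal.ofReal (Ft x ^ pr) ∂μ := by
            refine lintegral_mono_ae ?_
            filter_upwards [hFfin] with x hx
            rw [← ENNReal.ofReal_rpow_of_nonneg (ENNReal.toReal_nonneg (a := F x)) hpr0.le]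
            refine ENNReal.rpow_le_rpow ?_ hpr0.le
            calc ENNReal.ofReal (f x) ≤ F x := hfF x
              _ = ENNReal.ofReal (F x).toReal := (ENNReal.ofReal_toReal hx).symm
        _ ≤ K * ∫⁻ x, ENNReal.ofReal ((c₁⁻¹ * ht x) ^ pr) ∂μ := hlay
        _ ≤ K * ((ENNReal.ofReal c₁⁻¹) ^ pr * Ig) := by gcongr
    rw [hfrw, hgrw]
    calc (∫⁻ x, (ENNReal.ofReal (f x)) ^ pr ∂μ) ^ (1/pr)
        ≤ (K * ((ENNReal.ofReal c₁⁻¹) ^ pr * Ig)) ^ (1/pr) :=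
          ENNReal.rpow_le_rpow hchain (by positivity)
      _ = K ^ (1/pr) * (ENNReal.ofReal c₁⁻¹) * Ig ^ (1/pr) := by
          rw [ENNReal.mul_rpow_of_nonneg _ _ (by positivity : (0:ℝ) ≤ 1/pr),
            ENNReal.mul_rpow_of_nonneg _ _ (by positivity : (0:ℝ) ≤ 1/pr),
            ← ENNReal.rpow_mul (ENNReal.ofReal c₁⁻¹) pr (1/pr),
            mul_one_div, div_self hpr0.ne', ENNReal.rpow_one, mul_assoc]
      _ ≤ max K 1 * (ENNReal.ofReal c₁⁻¹) * Ig ^ (1/pr) := by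
          gcongr
          rcases le_total K 1 with hK1 | hK1
          · have h1 : K ^ (1/pr) ≤ (1:ℝ≥0∞) ^ (1/pr) := ENNReal.rpow_le_rpow hK1 (by positivity)
            rw [ENNReal.one_rpow] at h1
            exact h1.trans (le_max_right _ _)
          · have h1 : K ^ (1/pr) ≤ K ^ (1:ℝ) :=
              ENNReal.rpow_le_rpow_of_exponent_le hK1 (by rw [div_le_one hpr0]; exact hpr1)
            rw [ENNReal.rpow_one] at h1
            exact h1.trans (le_max_left _ _)

open MeasureTheory ENNReal in
/-- Lemma 3.2: if `f(z) > λ` implies `g > c₁ λ` on a set `B` with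
`0 < (sup_{y ∈ B} |y - z|)ⁿ ≤ c₂ |B|`, then `‖f‖_{L_p} ≤ c₃ ‖g‖_{L_p}` for all `1 ≤ p ≤ ∞`,
with `c₃` depending only on `c₁`, `c₂` and `n`. -/
theorem stmt11 (n : ℕ) (c₁ c₂ : ℝ) (hc₁ : 0 < c₁) (hc₂ : 0 < c₂) :
    ∃ c₃ : ℝ, 0 < c₃ ∧
      ∀ f g : EuclideanSpace ℝ (Fin n) → ℝ,
        (∀ x, 0 ≤ f x) → (∀ x, 0 ≤ g x) →
        (∀ (z : EuclideanSpace ℝ (Fin n)) (lam : ℝ), 0 < lam → lam < f z →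
          ∃ B : Set (EuclideanSpace ℝ (Fin n)), MeasurableSet B ∧
            (∀ y ∈ B, c₁ * lam < g y) ∧
            0 < (⨆ y : B, edist (y : EuclideanSpace ℝ (Fin n)) z) ^ n ∧
            (⨆ y : B, edist (y : EuclideanSpace ℝ (Fin n)) z) ^ n ≤
              ENNReal.ofReal c₂ * volume B) →
        ∀ p : ℝ≥0∞, 1 ≤ p →
          eLpNorm f p volume ≤ ENNReal.ofReal c₃ * eLpNorm g p volume := by
  classical
  have hKtop : (ENNReal.ofReal c₂ * 5 ^ n *
      volume (ball (0 : EuclideanSpace ℝ (Fin n)) 1)) ≠ ∞ := by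
    refine ENNReal.mul_ne_top (ENNReal.mul_ne_top ENNReal.ofReal_ne_top ?_)
      measure_ball_lt_top.ne
    exact ENNReal.pow_ne_top (by norm_num)
  set K : ℝ≥0∞ := ENNReal.ofReal c₂ * 5 ^ n *
    volume (ball (0 : EuclideanSpace ℝ (Fin n)) 1) with hKdef
  refine ⟨max K.toReal 1 / c₁,
    div_pos (lt_of_lt_of_le one_pos (le_max_right _ _)) hc₁, ?_⟩
  intro f g hf hg H p hp
  have hofReal : ENNReal.ofReal (max K.toReal 1 / c₁) = max K 1 * ENNReal.ofReal c₁⁻¹ := by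
    rw [div_eq_mul_inv, ENNReal.ofReal_mul (le_trans zero_le_one (le_max_right _ _))]
    congr 1
    rcases le_total K 1 with hK1 | hK1
    · have h1 : K.toReal ≤ 1 := by
        rw [← ENNReal.toReal_one]
        exact ENNReal.toReal_mono ENNReal.one_ne_top hK1
      rw [max_eq_right h1, max_eq_right hK1, ENNReal.ofReal_one]
    · have h1 : 1 ≤ K.toReal := by
        rw [← ENNReal.toReal_one]
        exact ENNReal.toReal_mono hKtop hK1
      rw [max_eq_left h1, max_eq_left hK1, ENNReal.ofReal_toReal hKtop]
  rw [hofReal]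
  exact aux_main f g hc₁ hf hg hKtop
    (fun lam hlam => aux_key n c₁ c₂ hc₂ f g H lam hlam) p hp

end
end
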